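/- arXiv:1210.5723 — 6 statements merged into one kernel-verified Lean document; each statement's English description precedes it below -/
import Mathlib

section
/- (L^p Caccioppoli-type inequality.) Let q > −1 and let ρ be a positive C¹ function on Ω which is weakly p-subharmonic, i.e. ∫_Ω |∇ρ|^{p−2} ⟨∇ρ, ∇φ⟩ dx ≤ 0 for every nonnegative φ ∈ C_c^1(Ω), and assume ρ^q |∇ρ|^p and ρ^{p+q} are locally integrable on Ω. Then ((q+1)/p)^p ∫_Ω ρ^q |∇ρ|^p |u|^p dx ≤ ∫_Ω ρ^{p+q} |∇u|^p dx for every u ∈ C_c^∞(Ω). -/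
open MeasureTheory
open scoped RealInnerProductSpace

section Aux

lemma aux_rpow_sub_two_mul {p a : ℝ} (hp : 1 < p) (ha : 0 ≤ a) :
    a ^ (p - 2) * a = a ^ (p - 1) := by
  rcases eq_or_lt_of_le ha with h | h
  · rw [← h, Real.zero_rpow (by linarith : p - 1 ≠ 0)]; simp
  · rw [show p - 1 = (p - 2) + 1 by ring, Real.rpow_add_one h.ne']

lemma aux_rpow_sub_two_mul_sq {p a : ℝ} (hp : 1 < p) (ha : 0 ≤ a) :
    a ^ (p - 2) * a ^ (2 : ℕ) = a ^ p := by
  rcases eq_or_lt_of_le ha with h | h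
  · rw [← h, Real.zero_rpow (by linarith : p ≠ 0)]; simp
  · rw [← Real.rpow_natCast a 2, ← Real.rpow_add h]
    norm_num

lemma aux_tendsto_norm_rpow_zero {E : Type*} [NormedAddCommGroup E] {r : ℝ} (hr : 0 < r) :
    Filter.Tendsto (fun v : E => ‖v‖ ^ r) (nhds 0) (nhds 0) := by
  have h := (Real.continuousAt_rpow_const 0 r (Or.inr hr.le)).tendsto
  rw [Real.zero_rpow hr.ne'] at h
  have h2 : Filter.Tendsto (fun v : E => ‖v‖) (nhds (0:E)) (nhds (0:ℝ)) := by
    simpa using continuous_norm.tendsto (0:E)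
  exact h.comp h2

lemma aux_continuous_norm_rpow_smul {E : Type*} [NormedAddCommGroup E] [NormedSpace ℝ E]
    {p : ℝ} (hp : 1 < p) :
    Continuous (fun v : E => ‖v‖ ^ (p - 2) • v) := by
  rw [continuous_iff_continuousAt]
  intro v
  rcases eq_or_ne v 0 with rfl | hv
  · rw [ContinuousAt]
    have h0 : ‖(0:E)‖ ^ (p - 2) • (0:E) = 0 := by simp
    rw [h0]
    apply squeeze_zero_norm ?_ (aux_tendsto_norm_rpow_zero (E := E) (show (0:ℝ) < p - 1 by linarith))
    intro w
    have : ‖(‖w‖ ^ (p-2) : ℝ) • w‖ = ‖w‖ ^ (p-2) * ‖w‖ := by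
      rw [norm_smul, Real.norm_rpow_of_nonneg (norm_nonneg w), norm_norm]
    rw [this, aux_rpow_sub_two_mul hp (norm_nonneg w)]
  · exact ((Real.continuousAt_rpow_const _ _
      (Or.inl (norm_ne_zero_iff.2 hv))).comp continuous_norm.continuousAt).smul continuousAt_id

lemma aux_young_param {p c : ℝ} (hp : 1 < p) (hc : 0 < c) {a b : ℝ} (ha : 0 ≤ a) (hb : 0 ≤ b) :
    a ^ (p - 1) * b ≤ (p - 1) / p * c * a ^ p + c ^ (1 - p) / p * b ^ p := by
  have hp0 : (0:ℝ) < p := by linarith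
  have hp1 : (0:ℝ) < p - 1 := by linarith
  have hpq : ((p / (p - 1)) : ℝ).HolderConjugate p := by
    exact ((Real.holderConjugate_iff_eq_conjExponent hp).mpr rfl).symm
  have key := Real.young_inequality_of_nonneg
    (a := c ^ ((p-1)/p) * a ^ (p-1)) (b := c ^ (-((p-1)/p)) * b)
    (mul_nonneg (Real.rpow_nonneg hc.le _) (Real.rpow_nonneg ha _))
    (mul_nonneg (Real.rpow_nonneg hc.le _) hb) hpq
  have h1 : c ^ ((p-1)/p) * a ^ (p-1) * (c ^ (-((p-1)/p)) * b) = a ^ (p-1) * b := by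
    have hcc : c ^ ((p-1)/p) * c ^ (-((p-1)/p)) = 1 := by
      rw [← Real.rpow_add hc]; simp
    calc c ^ ((p-1)/p) * a ^ (p-1) * (c ^ (-((p-1)/p)) * b)
        = (c ^ ((p-1)/p) * c ^ (-((p-1)/p))) * (a ^ (p-1) * b) := by ring
      _ = a ^ (p-1) * b := by rw [hcc, one_mul]
  have h2 : (c ^ ((p-1)/p) * a ^ (p-1)) ^ (p/(p-1)) = c * a ^ p := by
    rw [Real.mul_rpow (Real.rpow_nonneg hc.le _) (Real.rpow_nonneg ha _),
      ← Real.rpow_mul hc.le, ← Real.rpow_mul ha,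
      show (p-1)/p * (p/(p-1)) = 1 by field_simp,
      show (p-1) * (p/(p-1)) = p by field_simp, Real.rpow_one]
  have h3 : (c ^ (-((p-1)/p)) * b) ^ p = c ^ (1-p) * b ^ p := by
    rw [Real.mul_rpow (Real.rpow_nonneg hc.le _) hb, ← Real.rpow_mul hc.le,
      show -((p-1)/p) * p = 1 - p by field_simp; ring]
  rw [h1, h2, h3] at key
  have h4 : c * a ^ p / (p/(p-1)) = (p-1)/p * c * a ^ p := by
    field_simp
  rw [h4] at key
  calc a ^ (p-1) * b ≤ (p-1)/p * c * a ^ p + c ^ (1-p) * b ^ p / p := key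
    _ = (p-1)/p * c * a ^ p + c ^ (1-p)/p * b ^ p := by ring

lemma aux_pointwise {p q c : ℝ} (hp : 1 < p) (hq : -1 < q) (hc : 0 < c) {r R U V : ℝ}
    (hr : 0 < r) (hR : 0 ≤ R) (hU : 0 ≤ U) (hV : 0 ≤ V) :
    r ^ (q+1) * R ^ (p-1) * U ^ (p-1) * V ≤
      (p-1)/p * c * (r ^ q * R ^ p * U ^ p) + c ^ (1-p)/p * (r ^ (p+q) * V ^ p) := by
  have hp0 : p ≠ 0 := by positivity
  have ha : (0:ℝ) ≤ r ^ (q/p) * R * U := by positivity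
  have hb : (0:ℝ) ≤ r ^ ((p+q)/p) * V := by positivity
  have key := aux_young_param hp hc ha hb
  have e1 : (r ^ (q/p) * R * U) ^ (p-1) * (r ^ ((p+q)/p) * V)
      = r ^ (q+1) * R ^ (p-1) * U ^ (p-1) * V := by
    rw [Real.mul_rpow (mul_nonneg (Real.rpow_nonneg hr.le _) hR) hU,
      Real.mul_rpow (Real.rpow_nonneg hr.le _) hR, ← Real.rpow_mul hr.le]
    rw [show r ^ (q+1) = r ^ (q/p*(p-1)) * r ^ ((p+q)/p) by
      rw [← Real.rpow_add hr]; congr 1; field_simp; ring]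
    ring
  have e2 : (r ^ (q/p) * R * U) ^ p = r ^ q * R ^ p * U ^ p := by
    rw [Real.mul_rpow (mul_nonneg (Real.rpow_nonneg hr.le _) hR) hU,
      Real.mul_rpow (Real.rpow_nonneg hr.le _) hR, ← Real.rpow_mul hr.le,
      div_mul_cancel₀ _ hp0]
  have e3 : (r ^ ((p+q)/p) * V) ^ p = r ^ (p+q) * V ^ p := by
    rw [Real.mul_rpow (Real.rpow_nonneg hr.le _) hV, ← Real.rpow_mul hr.le,
      div_mul_cancel₀ _ hp0]
  rw [e1, e2, e3] at key
  exact key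

end Aux

theorem stmt3 {N : ℕ} (hN : 1 ≤ N) (p : ℝ) (hp : 1 < p) (q : ℝ) (hq : -1 < q)
    (Ω : Set (EuclideanSpace ℝ (Fin N))) (hΩ : IsOpen Ω)
    (ρ : EuclideanSpace ℝ (Fin N) → ℝ)
    (hρ : ContDiffOn ℝ 1 ρ Ω)
    (hρ_pos : ∀ x ∈ Ω, 0 < ρ x)
    (hρ_sh : ∀ φ : EuclideanSpace ℝ (Fin N) → ℝ,
      ContDiff ℝ 1 φ → HasCompactSupport φ → tsupport φ ⊆ Ω → (∀ x, 0 ≤ φ x) →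
      ∫ x in Ω, ‖gradient ρ x‖ ^ (p - 2) * ⟪gradient ρ x, gradient φ x⟫ ≤ 0)
    (hρq : LocallyIntegrableOn (fun x => ρ x ^ q * ‖gradient ρ x‖ ^ p) Ω)
    (hρpq : LocallyIntegrableOn (fun x => ρ x ^ (p + q)) Ω)
    (u : EuclideanSpace ℝ (Fin N) → ℝ)
    (hu : ContDiff ℝ (⊤ : ℕ∞) u) (hu_supp : HasCompactSupport u)
    (hu_sub : tsupport u ⊆ Ω) :
    ((q + 1) / p) ^ p * ∫ x in Ω, ρ x ^ q * ‖gradient ρ x‖ ^ p * |u x| ^ p ≤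
      ∫ x in Ω, ρ x ^ (p + q) * ‖gradient u x‖ ^ p := by
  have hp0 : (0:ℝ) < p := by linarith
  have hpne : p ≠ 0 := hp0.ne'
  set c : ℝ := (q + 1) / p with hc_def
  have hc : 0 < c := div_pos (by linarith) hp0
  set K : Set (EuclideanSpace ℝ (Fin N)) := tsupport u with hK_def
  have hK : IsCompact K := hu_supp
  have hKΩ : K ⊆ Ω := hu_sub
  -- basic vanishing facts
  have hu0 : ∀ x ∉ K, u x = 0 := fun x hx => image_eq_zero_of_notMem_tsupport hx
  have hgu0 : ∀ x ∉ K, gradient u x = 0 := by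
    intro x hx
    have : fderiv ℝ u x = 0 := by
      by_contra h
      exact hx (support_fderiv_subset ℝ (f := u) h)
    show (InnerProductSpace.toDual ℝ _).symm (fderiv ℝ u x) = 0
    rw [this, map_zero]
  -- the three main functions
  set f : EuclideanSpace ℝ (Fin N) → ℝ :=
    fun x => ρ x ^ q * ‖gradient ρ x‖ ^ p * |u x| ^ p with hf_def
  set h : EuclideanSpace ℝ (Fin N) → ℝ :=
    fun x => ρ x ^ (p + q) * ‖gradient u x‖ ^ p with hh_def
  set g : EuclideanSpace ℝ (Fin N) → ℝ :=
    fun x => ρ x ^ (q+1) * (|u x| ^ (p-2) * u x) *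
      (‖gradient ρ x‖ ^ (p-2) * ⟪gradient ρ x, gradient u x⟫) with hg_def
  -- continuity facts
  have hcρ : ContinuousOn ρ Ω := hρ.continuousOn
  have hcgρ : ContinuousOn (gradient ρ) Ω := by
    have h1 : ContinuousOn (fderiv ℝ ρ) Ω := hρ.continuousOn_fderiv_of_isOpen hΩ le_rfl
    exact ((InnerProductSpace.toDual ℝ _).symm.continuous.comp_continuousOn h1 : _)
  have hcu : Continuous u := hu.continuous
  have hcgu : Continuous (gradient u) := by
    have h1 : Continuous (fderiv ℝ u) := hu.continuous_fderiv (by simp)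
    exact ((InnerProductSpace.toDual ℝ _).symm.continuous.comp h1 : _)
  -- integrability helper
  have intOn : ∀ w : EuclideanSpace ℝ (Fin N) → ℝ,
      ContinuousOn w Ω → (∀ x ∉ K, w x = 0) → IntegrableOn w Ω := by
    intro w hw h0
    have hcont : Continuous w := by
      rw [continuous_iff_continuousAt]
      intro x
      by_cases hx : x ∈ Ω
      · exact hw.continuousAt (hΩ.mem_nhds hx)
      · have hx' : x ∉ K := fun hm => hx (hKΩ hm)
        have hev : w =ᶠ[nhds x] (fun _ => 0) := by
          filter_upwards [(isClosed_tsupport u).isOpen_compl.mem_nhds hx'] with y hy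
          exact h0 y hy
        exact ContinuousAt.congr (continuousAt_const) hev.symm
    have hsupp : HasCompactSupport w := HasCompactSupport.intro hK h0
    exact (hcont.integrable_of_hasCompactSupport hsupp).integrableOn
  -- integrability of f, g, h
  have hf_int : IntegrableOn f Ω := by
    apply intOn
    · exact ((hcρ.rpow_const (fun x hx => Or.inl (hρ_pos x hx).ne')).mul
        ((hcgρ.norm).rpow_const (fun x hx => Or.inr hp0.le))).mul
        (((hcu.abs).rpow_const (fun _ => Or.inr hp0.le)).continuousOn)
    · intro x hx
      simp only [hf_def, hu0 x hx, abs_zero, Real.zero_rpow hpne, mul_zero]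
  have hh_int : IntegrableOn h Ω := by
    apply intOn
    · exact (hcρ.rpow_const (fun x hx => Or.inl (hρ_pos x hx).ne')).mul
        (((hcgu.norm).rpow_const (fun _ => Or.inr hp0.le)).continuousOn)
    · intro x hx
      simp only [hh_def, hgu0 x hx, norm_zero, Real.zero_rpow hpne, mul_zero]
  have hg_int : IntegrableOn g Ω := by
    apply intOn
    · have h1 : Continuous (fun x => |u x| ^ (p-2) * u x) := by
        have := (aux_continuous_norm_rpow_smul (E := ℝ) hp).comp hcu
        simpa [Real.norm_eq_abs, smul_eq_mul, Function.comp_def] using this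
      have h2 : ContinuousOn (fun x => ‖gradient ρ x‖ ^ (p-2) *
          ⟪gradient ρ x, gradient u x⟫) Ω := by
        have h3 : ContinuousOn (fun x => (‖gradient ρ x‖ ^ (p-2)) • gradient ρ x) Ω :=
          (aux_continuous_norm_rpow_smul hp).comp_continuousOn hcgρ
        have h4 : ContinuousOn
            (fun x => ⟪(‖gradient ρ x‖ ^ (p-2)) • gradient ρ x, gradient u x⟫) Ω :=
          h3.inner hcgu.continuousOn
        refine h4.congr fun x hx => ?_
        beta_reduce; rw [real_inner_smul_left]
      exact ((hcρ.rpow_const (fun x hx => Or.inl (hρ_pos x hx).ne')).mul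
        h1.continuousOn).mul h2
    · intro x hx
      simp only [hg_def, hu0 x hx, hgu0 x hx, inner_zero_right, mul_zero, zero_mul]
  -- the test function φ
  set φ : EuclideanSpace ℝ (Fin N) → ℝ := fun x => ρ x ^ (q+1) * |u x| ^ p with hφ_def
  have hφ0 : ∀ x ∉ K, φ x = 0 := by
    intro x hx
    simp only [hφ_def, hu0 x hx, abs_zero, Real.zero_rpow hpne, mul_zero]
  have habs_c1 : ContDiff ℝ 1 (fun y => |u y| ^ p) := by
    have := (hu.of_le (by simp)).norm_rpow hp
    simpa [Real.norm_eq_abs] using this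
  have hφ_c1 : ContDiff ℝ 1 φ := by
    rw [contDiff_iff_contDiffAt]
    intro x
    by_cases hx : x ∈ Ω
    · have h1 : ContDiffAt ℝ 1 ρ x := hρ.contDiffAt (hΩ.mem_nhds hx)
      have h2 : ContDiffAt ℝ 1 (fun y => ρ y ^ (q+1)) x :=
        h1.rpow_const_of_ne (hρ_pos x hx).ne'
      exact h2.mul habs_c1.contDiffAt
    · have hx' : x ∉ K := fun hm => hx (hKΩ hm)
      have hev : (fun _ => (0:ℝ)) =ᶠ[nhds x] φ := by
        filter_upwards [(isClosed_tsupport u).isOpen_compl.mem_nhds hx'] with y hy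
        exact (hφ0 y hy).symm
      exact contDiffAt_const.congr_of_eventuallyEq hev.symm
  have hφ_supp : HasCompactSupport φ := HasCompactSupport.intro hK hφ0
  have hφ_sub : tsupport φ ⊆ Ω := by
    refine (closure_minimal ?_ (isClosed_tsupport u)).trans hKΩ
    intro x hx
    by_contra hxK
    exact hx (hφ0 x hxK)
  have hφ_nonneg : ∀ x, 0 ≤ φ x := by
    intro x
    by_cases hx : x ∈ Ω
    · exact mul_nonneg (Real.rpow_nonneg (hρ_pos x hx).le _)
        (Real.rpow_nonneg (abs_nonneg _) _)
    · rw [hφ0 x (fun hm => hx (hKΩ hm))]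
  -- gradient of φ on Ω
  have hgrad : ∀ x ∈ Ω, gradient φ x =
      ((q+1) * ρ x ^ q * |u x| ^ p) • gradient ρ x +
      (p * ρ x ^ (q+1) * (|u x| ^ (p-2) * u x)) • gradient u x := by
    intro x hx
    have hρd : DifferentiableAt ℝ ρ x :=
      (hρ.contDiffAt (hΩ.mem_nhds hx)).differentiableAt one_ne_zero
    have hud : DifferentiableAt ℝ u x := (hu.differentiable (by simp)).differentiableAt
    have h1 : HasFDerivAt (fun y => ρ y ^ (q+1))
        (((q+1) * ρ x ^ q) • fderiv ℝ ρ x) x := by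
      have := (Real.hasDerivAt_rpow_const
        (x := ρ x) (p := q+1) (Or.inl (hρ_pos x hx).ne')).comp_hasFDerivAt x hρd.hasFDerivAt
      simpa [show q + 1 - 1 = q by ring, Function.comp_def] using this
    have h2 : HasFDerivAt (fun y => |u y| ^ p)
        ((p * |u x| ^ (p-2) * u x) • fderiv ℝ u x) x :=
      (hasDerivAt_abs_rpow (u x) hp).comp_hasFDerivAt x hud.hasFDerivAt
    have h3 := h1.mul h2
    have hGρ : HasGradientAt ρ (gradient ρ x) x := hρd.hasGradientAt
    have hGu : HasGradientAt u (gradient u x) x := hud.hasGradientAt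
    have e1 : (InnerProductSpace.toDual ℝ _) (gradient ρ x) = fderiv ℝ ρ x :=
      (hasGradientAt_iff_hasFDerivAt.mp hGρ).fderiv.symm
    have e2 : (InnerProductSpace.toDual ℝ _) (gradient u x) = fderiv ℝ u x :=
      (hasGradientAt_iff_hasFDerivAt.mp hGu).fderiv.symm
    have h4 : HasGradientAt φ
        (((q+1) * ρ x ^ q * |u x| ^ p) • gradient ρ x +
         (p * ρ x ^ (q+1) * (|u x| ^ (p-2) * u x)) • gradient u x) x := by
      rw [hasGradientAt_iff_hasFDerivAt, map_add, _root_.map_smul, _root_.map_smul, e1, e2]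
      refine h3.congr_fderiv ?_
      module
    exact h4.gradient
  -- pointwise identity of the integrand
  have hident : ∀ x ∈ Ω,
      ‖gradient ρ x‖ ^ (p - 2) * ⟪gradient ρ x, gradient φ x⟫ = (q+1) * f x + p * g x := by
    intro x hx
    rw [hgrad x hx, inner_add_right, real_inner_smul_right, real_inner_smul_right,
      real_inner_self_eq_norm_sq]
    have hRR : ‖gradient ρ x‖ ^ (p-2) * ‖gradient ρ x‖ ^ (2:ℕ) = ‖gradient ρ x‖ ^ p :=
      aux_rpow_sub_two_mul_sq hp (norm_nonneg _)
    simp only [hf_def, hg_def]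
    linear_combination ((q+1) * ρ x ^ q * |u x| ^ p) * hRR
  -- main inequality from subharmonicity
  have hI := hρ_sh φ hφ_c1 hφ_supp hφ_sub hφ_nonneg
  have hEq : ∫ x in Ω, ‖gradient ρ x‖ ^ (p - 2) * ⟪gradient ρ x, gradient φ x⟫
      = ∫ x in Ω, ((q+1) * f x + p * g x) :=
    setIntegral_congr_fun hΩ.measurableSet (fun x hx => hident x hx)
  set A : ℝ := ∫ x in Ω, f x with hA_def
  set B : ℝ := ∫ x in Ω, h x with hB_def
  set G : ℝ := ∫ x in Ω, g x with hG_def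
  have hsplit : ∫ x in Ω, ((q+1) * f x + p * g x) = (q+1) * A + p * G := by
    rw [integral_add (hf_int.const_mul _) (hg_int.const_mul _),
      integral_const_mul, integral_const_mul]
  have hmain : (q+1) * A + p * G ≤ 0 := by
    rw [← hsplit, ← hEq]; exact hI
  -- pointwise bound for -g
  have hbound : ∀ x ∈ Ω, -g x ≤ (p-1)/p * c * f x + c ^ (1-p)/p * h x := by
    intro x hx
    have hr : 0 < ρ x := hρ_pos x hx
    have step1 : -g x ≤ |g x| := neg_le_abs _
    have step2 : |g x| ≤ ρ x ^ (q+1) * ‖gradient ρ x‖ ^ (p-1) * |u x| ^ (p-1) *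
        ‖gradient u x‖ := by
      have habs : |g x| = ρ x ^ (q+1) * (|u x| ^ (p-2) * |u x|) *
          (‖gradient ρ x‖ ^ (p-2) * |⟪gradient ρ x, gradient u x⟫|) := by
        simp only [hg_def, abs_mul]
        rw [abs_of_nonneg (Real.rpow_nonneg hr.le _),
          abs_of_nonneg (Real.rpow_nonneg (abs_nonneg _) _),
          abs_of_nonneg (Real.rpow_nonneg (norm_nonneg _) _)]
      rw [habs, aux_rpow_sub_two_mul hp (abs_nonneg _)]
      have hcs : |⟪gradient ρ x, gradient u x⟫| ≤ ‖gradient ρ x‖ * ‖gradient u x‖ :=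
        abs_real_inner_le_norm _ _
      have h5 : ‖gradient ρ x‖ ^ (p-2) * |⟪gradient ρ x, gradient u x⟫| ≤
          ‖gradient ρ x‖ ^ (p-1) * ‖gradient u x‖ := by
        rw [← aux_rpow_sub_two_mul hp (norm_nonneg _)]
        calc ‖gradient ρ x‖ ^ (p-2) * |⟪gradient ρ x, gradient u x⟫|
            ≤ ‖gradient ρ x‖ ^ (p-2) * (‖gradient ρ x‖ * ‖gradient u x‖) :=
              mul_le_mul_of_nonneg_left hcs (Real.rpow_nonneg (norm_nonneg _) _)
          _ = ‖gradient ρ x‖ ^ (p-2) * ‖gradient ρ x‖ * ‖gradient u x‖ := by ring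
      calc ρ x ^ (q+1) * (|u x| ^ (p-1)) *
          (‖gradient ρ x‖ ^ (p-2) * |⟪gradient ρ x, gradient u x⟫|)
          ≤ ρ x ^ (q+1) * (|u x| ^ (p-1)) * (‖gradient ρ x‖ ^ (p-1) * ‖gradient u x‖) := by
            apply mul_le_mul_of_nonneg_left h5
            positivity
        _ = ρ x ^ (q+1) * ‖gradient ρ x‖ ^ (p-1) * |u x| ^ (p-1) * ‖gradient u x‖ := by ring
    have step3 := aux_pointwise hp hq hc hr (norm_nonneg (gradient ρ x))
      (abs_nonneg (u x)) (norm_nonneg (gradient u x))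
    simp only [hf_def, hh_def]
    linarith
  -- integrate the bound
  have hGbound : -G ≤ (p-1)/p * c * A + c ^ (1-p)/p * B := by
    have h1 : ∫ x in Ω, (-g x) ≤ ∫ x in Ω, ((p-1)/p * c * f x + c ^ (1-p)/p * h x) := by
      apply setIntegral_mono_on hg_int.neg
        ((hf_int.const_mul _).add (hh_int.const_mul _)) hΩ.measurableSet
      intro x hx
      exact hbound x hx
    rw [integral_neg] at h1
    rwa [integral_add (hf_int.const_mul _) (hh_int.const_mul _),
      integral_const_mul, integral_const_mul] at h1
  -- final arithmetic
  have h5 : c * A ≤ c ^ (1-p) * B := by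
    have : (q+1) * A ≤ p * (-G) := by linarith
    have h6 : p * (-G) ≤ (p-1) * c * A + c ^ (1-p) * B := by
      have := mul_le_mul_of_nonneg_left hGbound hp0.le
      calc p * (-G) ≤ p * ((p-1)/p * c * A + c ^ (1-p)/p * B) := this
        _ = (p-1) * c * A + c ^ (1-p) * B := by field_simp
    have h7 : (q+1) = p * c := by rw [hc_def]; field_simp
    have h9 : (q+1) * A = p * c * A := by rw [h7]
    linarith
  have hcp1 : (0:ℝ) < c ^ (p-1) := Real.rpow_pos_of_pos hc _
  have h8 : c ^ (p-1) * (c * A) ≤ c ^ (p-1) * (c ^ (1-p) * B) :=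
    mul_le_mul_of_nonneg_left h5 hcp1.le
  have e1 : c ^ (p-1) * c ^ (1-p) = 1 := by
    rw [← Real.rpow_add hc]; norm_num
  have e2 : c ^ (p-1) * c = c ^ p := by
    nth_rewrite 2 [← Real.rpow_one c]
    rw [← Real.rpow_add hc]; norm_num
  calc c ^ p * A = c ^ (p-1) * (c * A) := by rw [← e2]; ring
    _ ≤ c ^ (p-1) * (c ^ (1-p) * B) := h8
    _ = B := by rw [← mul_assoc, e1, one_mul]
end

section
/- Let N ≥ 2 and 1 < p < N, let δ > 0, set p' = p/(p−1) and s = p − 1 + δ/p. Then for every u ∈ C_c^∞(ℝ^N ∖ {0}): ∫ |u(x)|^s / |x|^{p−1} dx ≤ (p/(N−p))^{p−1} (∫ |∇u|^p dx)^{1/p'} (∫ |u|^δ dx)^{1/p}. -/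
open MeasureTheory Filter

lemma sq_rpow_aux {a : ℝ} (ha : 0 ≤ a) (q : ℝ) : ((a^2 : ℝ)) ^ q = a ^ (2*q) := by
  rw [← Real.rpow_natCast a 2, ← Real.rpow_mul ha]
  norm_num

lemma sq_rpow_abs (t q : ℝ) : ((t^2 : ℝ)) ^ q = |t| ^ (2*q) := by
  rw [← sq_abs t, sq_rpow_aux (abs_nonneg t)]

lemma psi_hasDerivAt {p : ℝ} (hp : 1 < p) (t : ℝ) :
    HasDerivAt (fun t : ℝ => (t^2) ^ (p/2)) (p * (t^2) ^ ((p-2)/2) * t) t := by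
  rcases eq_or_ne t 0 with rfl | ht
  · simp only [mul_zero]
    rw [hasDerivAt_iff_tendsto_slope]
    have hb : Tendsto (fun y : ℝ => |y| ^ (p-1)) (nhdsWithin 0 {(0:ℝ)}ᶜ) (nhds 0) := by
      have h1 : ContinuousAt (fun y : ℝ => |y| ^ (p-1)) 0 :=
        (Real.continuousAt_rpow_const _ _ (Or.inr (by linarith))).comp continuous_abs.continuousAt
      have h0 : |(0:ℝ)| ^ (p-1) = 0 := by
        simp [Real.zero_rpow (by linarith : p - 1 ≠ 0)]
      have := h1.tendsto
      rw [h0] at this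
      exact this.mono_left nhdsWithin_le_nhds
    apply squeeze_zero_norm' _ hb
    filter_upwards [self_mem_nhdsWithin] with y (hy : y ≠ 0)
    have hy' : (0:ℝ) < |y| := abs_pos.2 hy
    have hs : slope (fun t : ℝ => (t^2) ^ (p/2)) 0 y = |y| ^ p / y := by
      rw [slope_def_field]
      rw [sq_rpow_abs]
      norm_num
      rw [Real.zero_rpow (by positivity : p/2 ≠ 0)]
      rw [show 2 * (p/2) = p by ring]
      ring
    rw [hs, Real.norm_eq_abs, abs_div]
    rw [abs_of_nonneg (Real.rpow_nonneg (abs_nonneg y) p)]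
    rw [Real.rpow_sub hy', Real.rpow_one]
  · have h1 : HasDerivAt (fun t : ℝ => t^2) (2*t) t := by
      simpa using hasDerivAt_pow 2 t
    have h3 : HasDerivAt (fun t : ℝ => (t^2) ^ (p/2)) ((2*t) * (p/2) * (t^2) ^ (p/2 - 1)) t :=
      h1.rpow_const (Or.inl (pow_ne_zero 2 ht))
    convert h3 using 1
    rw [show p/2 - 1 = (p-2)/2 by ring]
    ring

lemma psi'_abs {p : ℝ} (hp : 1 < p) (t : ℝ) :
    |p * (t^2) ^ ((p-2)/2) * t| ≤ p * |t| ^ (p-1) := by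
  rcases eq_or_ne t 0 with rfl | ht
  · simp [Real.zero_rpow (by linarith : p - 1 ≠ 0)]
  · have hy' : (0:ℝ) < |t| := abs_pos.2 ht
    rw [sq_rpow_abs, abs_mul, abs_mul, abs_of_nonneg (le_of_lt (by linarith : (0:ℝ) < p)),
      abs_of_nonneg (Real.rpow_nonneg (abs_nonneg t) _)]
    rw [mul_assoc]
    have : |t| ^ (2 * ((p-2)/2)) * |t| = |t| ^ (p - 1) := by
      rw [show 2 * ((p-2)/2) = p - 2 by ring]
      rw [Real.rpow_sub hy', Real.rpow_sub hy', Real.rpow_one, Real.rpow_two]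
      field_simp
    rw [this]

lemma psi'_cont {p : ℝ} (hp : 1 < p) :
    Continuous (fun t : ℝ => p * (t^2) ^ ((p-2)/2) * t) := by
  rw [continuous_iff_continuousAt]
  intro t
  rcases eq_or_ne t 0 with rfl | ht
  · have hb : Tendsto (fun t : ℝ => p * (t^2) ^ ((p-2)/2) * t) (nhds 0) (nhds 0) := by
      apply squeeze_zero_norm (fun y => (psi'_abs hp y))
      have h1 : ContinuousAt (fun y : ℝ => p * |y| ^ (p-1)) 0 :=
        continuousAt_const.mul
          (continuous_abs.continuousAt.rpow_const (Or.inr (by linarith)))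
      have h0' : p * |(0:ℝ)| ^ (p-1) = 0 := by
        simp [Real.zero_rpow (by linarith : p - 1 ≠ 0)]
      have := h1.tendsto
      rw [h0'] at this
      exact this
    simpa [ContinuousAt] using hb
  · apply ContinuousAt.mul
    apply ContinuousAt.mul continuousAt_const
    · exact ((continuous_pow 2).continuousAt).rpow_const (Or.inl (pow_ne_zero 2 ht))
    · exact continuousAt_id

lemma psi_cont {p : ℝ} (hp : 1 < p) : Continuous (fun t : ℝ => (t^2) ^ (p/2)) :=
  (continuous_pow 2).rpow_const (fun _ => Or.inr (by positivity))

lemma integral_fderiv_eq_zero {E : Type*} [NormedAddCommGroup E] [NormedSpace ℝ E]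
    [MeasurableSpace E] [BorelSpace E] [FiniteDimensional ℝ E] {μ : Measure E}
    [μ.IsAddHaarMeasure] [SecondCountableTopology E] {f : E → ℝ} (v : E)
    (hf : Differentiable ℝ f)
    (hfi : Integrable f μ) (hf'i : Integrable (fun x => fderiv ℝ f x v) μ) :
    ∫ x, fderiv ℝ f x v ∂μ = 0 := by
  have hz : (fun x => f x * fderiv ℝ (fun _ => (1:ℝ)) x v) = fun _ => 0 := by
    funext x; simp [fderiv_const]
  have h := integral_mul_fderiv_eq_neg_fderiv_mul_of_integrable (μ := μ) (f := f)
      (g := fun _ => (1:ℝ)) (v := v) (by simpa using hf'i)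
      (by rw [hz]; exact integrable_zero _ _ _) (by simpa using hfi)
      (fun x _ => hf x) (fun x _ => differentiableAt_const (1:ℝ))
  rw [hz] at h
  simp only [integral_zero] at h
  have h2 : ∫ x, fderiv ℝ f x v * 1 ∂μ = ∫ x, fderiv ℝ f x v ∂μ := by
    simp
  rw [h2] at h
  linarith

set_option maxHeartbeats 1000000 in
theorem stmt6 {N : ℕ} (hN : 2 ≤ N) (p : ℝ) (hp : 1 < p) (hpN : p < N)
    (δ p' s : ℝ) (hδ : 0 < δ) (hp' : p' = p / (p - 1)) (hs : s = p - 1 + δ / p)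
    (u : EuclideanSpace ℝ (Fin N) → ℝ)
    (hu : ContDiff ℝ (⊤ : ℕ∞) u) (hu_supp : HasCompactSupport u)
    (hu_sub : tsupport u ⊆ {(0 : EuclideanSpace ℝ (Fin N))}ᶜ) :
    ∫ x, |u x| ^ s / ‖x‖ ^ (p - 1) ≤
      (p / (N - p)) ^ (p - 1) *
        (∫ x, ‖gradient u x‖ ^ p) ^ (1 / p') *
        (∫ x, |u x| ^ δ) ^ (1 / p) := by
  classical
  have hp0 : (0:ℝ) < p := by linarith
  have hp1 : (0:ℝ) < p - 1 := by linarith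
  have hNp : (0:ℝ) < (N:ℝ) - p := by linarith
  have hs0 : 0 < s := by rw [hs]; positivity
  have hp'1 : 1 < p' := by rw [hp', lt_div_iff₀ hp1]; linarith
  have hp'0 : 0 < p' := by linarith
  have hconj : p'.HolderConjugate p := by
    exact ((Real.holderConjugate_iff_eq_conjExponent hp).2 hp').symm
  have hinv : 1/p' + 1/p = 1 := by
    rw [one_div, one_div]; exact hconj.inv_add_inv_eq_one
  -- support facts
  have hKc : IsClosed (tsupport u) := isClosed_tsupport u
  have hUopen : IsOpen (tsupport u)ᶜ := hKc.isOpen_compl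
  have h0U : (0 : EuclideanSpace ℝ (Fin N)) ∈ (tsupport u)ᶜ := fun h => (hu_sub h) rfl
  have hu0 : ∀ ⦃x⦄, x ∉ tsupport u → u x = 0 := fun x hx => image_eq_zero_of_notMem_tsupport hx
  have hxne : ∀ ⦃x : EuclideanSpace ℝ (Fin N)⦄, x ∈ tsupport u → x ≠ 0 :=
    fun x hx h0 => (hu_sub hx) (by rw [h0]; exact rfl)
  have hudiff : Differentiable ℝ u := hu.differentiable (by simp)
  have hufc : Continuous (fderiv ℝ u) := hu.continuous_fderiv (by simp)
  -- helper: continuity + compact support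
  have mk_cont : ∀ f : EuclideanSpace ℝ (Fin N) → ℝ,
      ContinuousOn f {(0:EuclideanSpace ℝ (Fin N))}ᶜ →
      (∀ ⦃x⦄, x ∉ tsupport u → f x = 0) → Continuous f ∧ HasCompactSupport f := by
    intro f h1 h2
    constructor
    · rw [continuous_iff_continuousAt]
      intro x
      rcases eq_or_ne x 0 with rfl | hx
      · have hev : f =ᶠ[nhds (0:EuclideanSpace ℝ (Fin N))] fun _ => 0 :=
          Filter.eventually_of_mem (hUopen.mem_nhds h0U) (fun y hy => h2 hy)
        exact hev.continuousAt
      · exact h1.continuousAt (compl_singleton_mem_nhds hx)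
    · exact HasCompactSupport.intro hu_supp (fun x hx => h2 hx)
  -- the functions
  set ψ : ℝ → ℝ := fun t => (t^2) ^ (p/2) with hψdef
  set ψ' : ℝ → ℝ := fun t => p * (t^2) ^ ((p-2)/2) * t with hψ'def
  set G : EuclideanSpace ℝ (Fin N) → ℝ := fun x => ‖x‖ ^ (-p) with hGdef
  set G' : EuclideanSpace ℝ (Fin N) → (EuclideanSpace ℝ (Fin N) →L[ℝ] ℝ) :=
    fun x => (-p * ‖x‖ ^ (-p-2)) • (innerSL ℝ x) with hG'def
  have hψ0 : ψ 0 = 0 := by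
    simp [hψdef]
    exact Real.zero_rpow (by positivity)
  have hψ'0 : ψ' 0 = 0 := by simp [hψ'def]
  have hψabs : ∀ t, ψ t = |t| ^ p := by
    intro t
    rw [hψdef]
    simp only []
    rw [sq_rpow_abs, show 2 * (p/2) = p by ring]
  have hψnn : ∀ t, 0 ≤ ψ t := fun t => Real.rpow_nonneg (by positivity) _
  have hGnn : ∀ x, 0 ≤ G x := fun x => Real.rpow_nonneg (norm_nonneg x) _
  have hG0 : G (0 : EuclideanSpace ℝ (Fin N)) = 0 := by
    simp [hGdef]
    exact Real.zero_rpow (by linarith)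
  -- derivative of G away from 0
  have hGd : ∀ x : EuclideanSpace ℝ (Fin N), x ≠ 0 → HasFDerivAt G (G' x) x := by
    intro x hx
    have hn : (0:ℝ) < ‖x‖ := norm_pos_iff.2 hx
    have h1 : HasFDerivAt (fun y : EuclideanSpace ℝ (Fin N) => ‖y‖^2)
        ((2:ℕ) • (innerSL ℝ x)) x := by
      have := (hasFDerivAt_id x).norm_sq
      simpa using this
    have h2 : HasDerivAt (fun s : ℝ => s ^ (-p/2)) ((-p/2) * (‖x‖^2) ^ (-p/2 - 1)) (‖x‖^2) :=
      Real.hasDerivAt_rpow_const (Or.inl (by positivity))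
    have h3 := h2.comp_hasFDerivAt x h1
    have hfun : G = fun y : EuclideanSpace ℝ (Fin N) => ((‖y‖^2 : ℝ)) ^ (-p/2) := by
      funext y
      rw [hGdef]
      simp only []
      rw [sq_rpow_aux (norm_nonneg y), show 2 * (-p/2) = -p by ring]
    rw [hfun]
    refine h3.congr_fderiv ?_
    symm
    ext v
    simp only [hG'def, ContinuousLinearMap.smul_apply, innerSL_apply_apply,
      ContinuousLinearMap.coe_smul', Pi.smul_apply, smul_eq_mul, nsmul_eq_mul,
      Nat.cast_ofNat]
    rw [sq_rpow_aux (norm_nonneg x), show 2 * (-p/2 - 1) = -p - 2 by ring]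
    ring
  set Φ : EuclideanSpace ℝ (Fin N) → ℝ := fun x => ψ (u x) * G x with hΦdef
  set Φ' : EuclideanSpace ℝ (Fin N) → (EuclideanSpace ℝ (Fin N) →L[ℝ] ℝ) :=
    fun x => ψ (u x) • G' x + G x • (ψ' (u x) • fderiv ℝ u x) with hΦ'def
  have hΦd : ∀ x, HasFDerivAt Φ (Φ' x) x := by
    intro x
    by_cases hx : x ∈ tsupport u
    · have hxn := hxne hx
      have hu' : HasFDerivAt (fun y => ψ (u y)) (ψ' (u x) • fderiv ℝ u x) x :=
        HasDerivAt.comp_hasFDerivAt x (psi_hasDerivAt hp (u x)) (hudiff x).hasFDerivAt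
      exact hu'.mul (hGd x hxn)
    · have hev : Φ =ᶠ[nhds x] fun _ => 0 :=
        Filter.eventually_of_mem (hUopen.mem_nhds hx)
          (fun y hy => by simp [hΦdef, hu0 hy, hψ0])
      have h0 : Φ' x = 0 := by
        simp [hΦ'def, hu0 hx, hψ0, hψ'0]
      rw [h0]
      exact (hasFDerivAt_const (0:ℝ) x).congr_of_eventuallyEq hev
  -- continuity facts
  have hGcont : ContinuousOn G {(0:EuclideanSpace ℝ (Fin N))}ᶜ :=
    ContinuousOn.rpow_const continuous_norm.continuousOn
      (fun x hx => Or.inl (norm_ne_zero_iff.2 hx))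
  have hψu : Continuous fun x => ψ (u x) := (psi_cont hp).comp hu.continuous
  have hψ'u : Continuous fun x => ψ' (u x) := (psi'_cont hp).comp hu.continuous
  have hΦcs : Continuous Φ ∧ HasCompactSupport Φ := mk_cont Φ
    (hψu.continuousOn.mul hGcont)
    (fun x hx => by simp [hΦdef, hu0 hx, hψ0])
  have hΦint : Integrable Φ := hΦcs.1.integrable_of_hasCompactSupport hΦcs.2
  have hΦnn : ∀ x, 0 ≤ Φ x := fun x => mul_nonneg (hψnn _) (hGnn _)
  have hΦ'zero : ∀ ⦃x⦄, x ∉ tsupport u → ∀ v, Φ' x v = 0 := by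
    intro x hx v
    simp [hΦ'def, hu0 hx, hψ0, hψ'0]
  have hΦ'contOn : ∀ v : EuclideanSpace ℝ (Fin N),
      ContinuousOn (fun x => Φ' x v) {(0:EuclideanSpace ℝ (Fin N))}ᶜ := by
    intro v
    have heq : (fun x => Φ' x v) = fun x =>
        ψ (u x) * ((-p * ‖x‖ ^ (-p-2)) * (inner ℝ x v : ℝ))
        + G x * (ψ' (u x) * fderiv ℝ u x v) := by
      funext x
      simp [hΦ'def, hG'def]
    rw [heq]
    apply ContinuousOn.add
    · apply hψu.continuousOn.mul
      apply ContinuousOn.mul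
      · exact continuousOn_const.mul
          (ContinuousOn.rpow_const continuous_norm.continuousOn
            (fun x hx => Or.inl (norm_ne_zero_iff.2 hx)))
      · exact (continuous_id.inner continuous_const).continuousOn
    · apply hGcont.mul
      apply Continuous.continuousOn
      exact hψ'u.mul (hufc.clm_apply continuous_const)
  -- basis expansion
  have hbasis : ∀ x : EuclideanSpace ℝ (Fin N),
      ∑ i, x i • EuclideanSpace.single i (1:ℝ) = x := by
    intro x
    have h := (EuclideanSpace.basisFun (Fin N) ℝ).sum_repr x
    simpa [EuclideanSpace.basisFun_apply, EuclideanSpace.basisFun_repr] using h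
  -- integration by parts, coordinatewise
  have hIBPi : ∀ i : Fin N,
      Integrable (fun x => Φ x + x i * (Φ' x (EuclideanSpace.single i 1))) ∧
      ∫ x, (Φ x + x i * (Φ' x (EuclideanSpace.single i 1))) = 0 := by
    intro i
    have hproj : Continuous fun x : EuclideanSpace ℝ (Fin N) => x i :=
      (EuclideanSpace.proj (𝕜 := ℝ) i).continuous
    have hfd : ∀ x, HasFDerivAt (fun y : EuclideanSpace ℝ (Fin N) => Φ y * y i)
        (Φ x • (EuclideanSpace.proj (𝕜 := ℝ) i : EuclideanSpace ℝ (Fin N) →L[ℝ] ℝ)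
          + x i • Φ' x) x := by
      intro x
      exact (hΦd x).mul ((EuclideanSpace.proj (𝕜 := ℝ) i).hasFDerivAt (x := x))
    have hdiff : Differentiable ℝ (fun y : EuclideanSpace ℝ (Fin N) => Φ y * y i) :=
      fun x => (hfd x).differentiableAt
    have hfint : Integrable (fun y : EuclideanSpace ℝ (Fin N) => Φ y * y i) := by
      apply Continuous.integrable_of_hasCompactSupport (hΦcs.1.mul hproj)
      exact hΦcs.2.mul_right
    have hder_eq : ∀ x, fderiv ℝ (fun y : EuclideanSpace ℝ (Fin N) => Φ y * y i) x
        (EuclideanSpace.single i 1) = Φ x + x i * Φ' x (EuclideanSpace.single i 1) := by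
      intro x
      rw [(hfd x).fderiv]
      simp [PiLp.proj_apply, EuclideanSpace.single_apply]
    have hmul_cs : Continuous (fun x => Φ' x (EuclideanSpace.single i 1)) ∧
        HasCompactSupport (fun x => Φ' x (EuclideanSpace.single i 1)) :=
      mk_cont _ (hΦ'contOn _) (fun x hx => hΦ'zero hx _)
    have hint2 : Integrable (fun x => Φ x + x i * Φ' x (EuclideanSpace.single i 1)) := by
      apply hΦint.add
      apply Continuous.integrable_of_hasCompactSupport (hproj.mul hmul_cs.1)
      exact hmul_cs.2.mul_left
    have hzero : ∫ x, fderiv ℝ (fun y : EuclideanSpace ℝ (Fin N) => Φ y * y i) x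
        (EuclideanSpace.single i 1) = 0 := by
      apply integral_fderiv_eq_zero _ hdiff hfint
      rw [show (fun x => fderiv ℝ (fun y : EuclideanSpace ℝ (Fin N) => Φ y * y i) x
        (EuclideanSpace.single i 1))
        = fun x => Φ x + x i * Φ' x (EuclideanSpace.single i 1) from funext hder_eq]
      exact hint2
    rw [show (fun x => fderiv ℝ (fun y : EuclideanSpace ℝ (Fin N) => Φ y * y i) x
        (EuclideanSpace.single i 1))
        = fun x => Φ x + x i * Φ' x (EuclideanSpace.single i 1) from funext hder_eq] at hzero
    exact ⟨hint2, hzero⟩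
  -- divergence theorem conclusion
  have hsum : ∫ x, ((N:ℝ) * Φ x + Φ' x x) = 0 := by
    have h2 : ∀ x : EuclideanSpace ℝ (Fin N),
        (∑ i : Fin N, (Φ x + x i * Φ' x (EuclideanSpace.single i 1)))
        = (N:ℝ) * Φ x + Φ' x x := by
      intro x
      rw [Finset.sum_add_distrib, Finset.sum_const, Finset.card_univ, Fintype.card_fin]
      congr 1
      · rw [nsmul_eq_mul]
      · calc ∑ i, x i * Φ' x (EuclideanSpace.single i 1)
            = ∑ i, Φ' x (x i • EuclideanSpace.single i 1) := by
              simp [_root_.map_smul]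
          _ = Φ' x (∑ i, x i • EuclideanSpace.single i 1) := (map_sum (Φ' x) _ _).symm
          _ = Φ' x x := by rw [hbasis]
    have h1 : ∫ x, (∑ i : Fin N, (Φ x + x i * Φ' x (EuclideanSpace.single i 1))) = 0 := by
      rw [integral_finset_sum _ (fun i _ => (hIBPi i).1)]
      rw [Finset.sum_eq_zero (fun i _ => (hIBPi i).2)]
    rw [show (fun x : EuclideanSpace ℝ (Fin N) =>
        ∑ i : Fin N, (Φ x + x i * Φ' x (EuclideanSpace.single i 1)))
        = fun x => (N:ℝ) * Φ x + Φ' x x from funext h2] at h1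
    exact h1
  -- pointwise divergence identity
  set T : EuclideanSpace ℝ (Fin N) → ℝ := fun x => ψ' (u x) * (fderiv ℝ u x x) * G x with hTdef
  have hpt : ∀ x, (N:ℝ) * Φ x + Φ' x x = T x + ((N:ℝ) - p) * Φ x := by
    intro x
    rcases eq_or_ne x 0 with rfl | hx
    · have hu0' : u 0 = 0 := hu0 h0U
      have e1 : Φ 0 = 0 := by rw [hΦdef]; simp only []; rw [hu0', hψ0, zero_mul]
      have e2 : T 0 = 0 := by rw [hTdef]; simp only []; rw [hu0', hψ'0, zero_mul, zero_mul]
      have e3 : Φ' 0 0 = 0 := by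
        rw [hΦ'def]
        simp only [ContinuousLinearMap.add_apply, ContinuousLinearMap.smul_apply, smul_eq_mul]
        rw [hu0', hψ0, hψ'0, hG0]
        ring
      rw [e1, e2, e3]
      ring
    · have hn : (0:ℝ) < ‖x‖ := norm_pos_iff.2 hx
      have hGx : (G' x) x = -p * G x := by
        rw [hG'def]
        simp only [ContinuousLinearMap.smul_apply, innerSL_apply_apply, smul_eq_mul]
        rw [real_inner_self_eq_norm_sq, hGdef]
        simp only []
        rw [mul_assoc, ← Real.rpow_natCast ‖x‖ 2, ← Real.rpow_add hn]
        norm_num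
      rw [hΦ'def]
      simp only [ContinuousLinearMap.add_apply, ContinuousLinearMap.smul_apply, smul_eq_mul]
      rw [hGx, hTdef, hΦdef]
      ring
  have hTcs : Continuous T ∧ HasCompactSupport T := by
    apply mk_cont
    · apply ContinuousOn.mul
      · exact (hψ'u.mul (hufc.clm_apply continuous_id)).continuousOn
      · exact hGcont
    · intro x hx
      simp [hTdef, hu0 hx, hψ'0]
  have hTint : Integrable T := hTcs.1.integrable_of_hasCompactSupport hTcs.2
  set A := ∫ x, Φ x with hAdef
  have hsplit : ((N:ℝ) - p) * A = - ∫ x, T x := by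
    have h3 : ∫ x, (T x + ((N:ℝ) - p) * Φ x) = 0 := by
      rw [show (fun x => T x + ((N:ℝ) - p) * Φ x)
        = fun x => (N:ℝ) * Φ x + Φ' x x from funext (fun x => (hpt x).symm)]
      exact hsum
    rw [integral_add hTint (hΦint.const_mul _), integral_const_mul] at h3
    rw [hAdef]
    linarith
  -- Hölder setup
  set f1 : EuclideanSpace ℝ (Fin N) → ℝ := fun x => |u x| ^ (p-1) * ‖x‖ ^ (1-p) with hf1def
  set f2 : EuclideanSpace ℝ (Fin N) → ℝ := fun x => ‖fderiv ℝ u x‖ with hf2def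
  have hf1cs : Continuous f1 ∧ HasCompactSupport f1 := by
    apply mk_cont
    · apply ContinuousOn.mul
      · exact ((hu.continuous.abs).rpow_const (fun x => Or.inr (le_of_lt hp1))).continuousOn
      · exact ContinuousOn.rpow_const continuous_norm.continuousOn
          (fun x hx => Or.inl (norm_ne_zero_iff.2 hx))
    · intro x hx
      simp [hf1def, hu0 hx, Real.zero_rpow (ne_of_gt hp1)]
  have hf1nn : ∀ x, 0 ≤ f1 x := fun x =>
    mul_nonneg (Real.rpow_nonneg (abs_nonneg _) _) (Real.rpow_nonneg (norm_nonneg _) _)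
  have hf2cont : Continuous f2 := hufc.norm
  have hfderiv0 : ∀ ⦃x : EuclideanSpace ℝ (Fin N)⦄, x ∉ tsupport u → fderiv ℝ u x = 0 := by
    intro x hx
    have hev : u =ᶠ[nhds x] fun _ => (0:ℝ) :=
      Filter.eventually_of_mem (hUopen.mem_nhds hx) (fun z hz => hu0 hz)
    rw [hev.fderiv_eq, fderiv_const_apply]
  have hf2cs : HasCompactSupport f2 := by
    apply HasCompactSupport.intro hu_supp
    intro x hx
    rw [hf2def]
    simp only [norm_eq_zero]
    exact hfderiv0 hx
  have hf1mem : MemLp f1 (ENNReal.ofReal p') volume :=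
    hf1cs.1.memLp_of_hasCompactSupport hf1cs.2
  have hf2mem : MemLp f2 (ENNReal.ofReal p) volume :=
    hf2cont.memLp_of_hasCompactSupport hf2cs
  have hf1pow : ∀ x, f1 x ^ p' = Φ x := by
    intro x
    rcases eq_or_ne x 0 with rfl | hx
    · rw [hf1def, hΦdef]
      simp only [norm_zero]
      rw [Real.zero_rpow (by linarith : 1 - p ≠ 0), mul_zero,
        Real.zero_rpow (ne_of_gt hp'0), hG0, mul_zero]
    · have hn : (0:ℝ) < ‖x‖ := norm_pos_iff.2 hx
      rw [hf1def, hΦdef]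
      simp only []
      rw [Real.mul_rpow (Real.rpow_nonneg (abs_nonneg _) _) (Real.rpow_nonneg (norm_nonneg _) _)]
      rw [← Real.rpow_mul (abs_nonneg _), ← Real.rpow_mul (norm_nonneg _)]
      rw [hψabs, hGdef]
      simp only []
      congr 1
      · congr 1
        rw [hp']
        field_simp
      · congr 1
        rw [hp']
        field_simp
        ring
  have hTbound : ∀ x, -T x ≤ p * (f1 x * f2 x) := by
    intro x
    rcases eq_or_ne x 0 with rfl | hx
    · have hu0' : u 0 = 0 := hu0 h0U
      rw [hTdef, hf1def]
      simp only [norm_zero, hu0', hψ'0]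
      rw [Real.zero_rpow (by linarith : 1 - p ≠ 0)]
      simp
    · have hn : (0:ℝ) < ‖x‖ := norm_pos_iff.2 hx
      calc -T x ≤ |T x| := neg_le_abs _
        _ = |ψ' (u x)| * |fderiv ℝ u x x| * G x := by
            rw [hTdef]
            simp only []
            rw [abs_mul, abs_mul, abs_of_nonneg (hGnn x)]
        _ ≤ (p * |u x| ^ (p-1)) * (‖fderiv ℝ u x‖ * ‖x‖) * G x := by
            apply mul_le_mul_of_nonneg_right _ (hGnn x)
            apply mul_le_mul (psi'_abs hp (u x))
            · rw [show |fderiv ℝ u x x| = ‖fderiv ℝ u x x‖ from rfl]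
              exact (fderiv ℝ u x).le_opNorm x
            · exact abs_nonneg _
            · positivity
        _ = p * (f1 x * f2 x) := by
            rw [hf1def, hf2def, hGdef]
            simp only []
            rw [show ‖x‖ ^ (1-p) = ‖x‖ * ‖x‖ ^ (-p) by
              rw [show (1:ℝ) - p = 1 + (-p) by ring, Real.rpow_add hn, Real.rpow_one]]
            ring
  -- Hölder inequality 1
  have hH1 : ∫ x, f1 x * f2 x ≤ (∫ x, f1 x ^ p') ^ (1/p') * (∫ x, f2 x ^ p) ^ (1/p) :=
    integral_mul_le_Lp_mul_Lq_of_nonneg hconj (Filter.Eventually.of_forall hf1nn)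
      (Filter.Eventually.of_forall (fun x => norm_nonneg _)) hf1mem hf2mem
  set B := ∫ x, ‖fderiv ℝ u x‖ ^ p with hBdef
  have hAnn : 0 ≤ A := integral_nonneg hΦnn
  have hBnn : 0 ≤ B := integral_nonneg (fun x => Real.rpow_nonneg (norm_nonneg _) _)
  have hf1f2int : Integrable (fun x => f1 x * f2 x) := by
    apply Continuous.integrable_of_hasCompactSupport (hf1cs.1.mul hf2cont)
    exact hf1cs.2.mul_right
  have hkey : ((N:ℝ) - p) * A ≤ p * (A ^ (1/p') * B ^ (1/p)) := by
    have h4 : - ∫ x, T x ≤ p * ∫ x, f1 x * f2 x := by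
      rw [← integral_neg, ← integral_const_mul]
      apply integral_mono hTint.neg (hf1f2int.const_mul p) hTbound
    have h5 : ∫ x, f1 x ^ p' = A := by
      rw [hAdef]
      exact integral_congr_ae (Filter.Eventually.of_forall (fun x => hf1pow x))
    rw [hsplit]
    calc - ∫ x, T x ≤ p * ∫ x, f1 x * f2 x := h4
      _ ≤ p * ((∫ x, f1 x ^ p') ^ (1/p') * (∫ x, f2 x ^ p) ^ (1/p)) := by
          apply mul_le_mul_of_nonneg_left _ (le_of_lt hp0)
          exact hH1
      _ = p * (A ^ (1/p') * B ^ (1/p)) := by rw [h5, hBdef]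
  -- Hardy conclusion
  have hardy : A ^ (1/p') ≤ (p / ((N:ℝ) - p)) ^ (p-1) * B ^ (1/p') := by
    rcases eq_or_lt_of_le hAnn with hA0 | hApos
    · rw [← hA0, Real.zero_rpow (by positivity : 1/p' ≠ 0)]
      positivity
    · have hstep : A ^ (1/p) ≤ (p / ((N:ℝ) - p)) * B ^ (1/p) := by
        have hApow : A = A ^ (1/p') * A ^ (1/p) := by
          rw [← Real.rpow_add hApos, hinv, Real.rpow_one]
        have hA'pos : 0 < A ^ (1/p') := Real.rpow_pos_of_pos hApos _
        have h6 : (((N:ℝ) - p) * A ^ (1/p)) * A ^ (1/p') ≤ (p * B ^ (1/p)) * A ^ (1/p') := by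
          calc (((N:ℝ) - p) * A ^ (1/p)) * A ^ (1/p')
              = ((N:ℝ) - p) * (A ^ (1/p') * A ^ (1/p)) := by ring
            _ ≤ p * (A ^ (1/p') * B ^ (1/p)) := by rw [← hApow]; exact hkey
            _ = (p * B ^ (1/p)) * A ^ (1/p') := by ring
        have h7 := le_of_mul_le_mul_right h6 hA'pos
        rw [div_mul_eq_mul_div, le_div_iff₀ hNp]
        linarith
      have h7 := Real.rpow_le_rpow (Real.rpow_nonneg hAnn _) hstep (le_of_lt hp1)
      rw [← Real.rpow_mul hAnn] at h7
      rw [Real.mul_rpow (by positivity) (Real.rpow_nonneg hBnn _)] at h7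
      rw [← Real.rpow_mul hBnn] at h7
      have hexp : 1/p * (p-1) = 1/p' := by
        rw [hp']
        field_simp
      rw [hexp] at h7
      exact h7
    -- second Hölder
  set g2 : EuclideanSpace ℝ (Fin N) → ℝ := fun x => |u x| ^ (δ/p) with hg2def
  have hg2cont : Continuous g2 :=
    (hu.continuous.abs).rpow_const (fun x => Or.inr (by positivity))
  have hg2cs : HasCompactSupport g2 := by
    apply HasCompactSupport.intro hu_supp
    intro x hx
    rw [hg2def]
    simp only []
    rw [hu0 hx, abs_zero, Real.zero_rpow (by positivity : δ/p ≠ 0)]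
  have hg2mem : MemLp g2 (ENNReal.ofReal p) volume := hg2cont.memLp_of_hasCompactSupport hg2cs
  have hg2nn : ∀ x, 0 ≤ g2 x := fun x => Real.rpow_nonneg (abs_nonneg _) _
  have hLpt : ∀ x, |u x| ^ s / ‖x‖ ^ (p-1) = f1 x * g2 x := by
    intro x
    rcases eq_or_ne x 0 with rfl | hx
    · rw [hf1def]
      simp only [norm_zero]
      rw [Real.zero_rpow (ne_of_gt hp1), Real.zero_rpow (by linarith : (1:ℝ) - p ≠ 0)]
      simp
    · have hn : (0:ℝ) < ‖x‖ := norm_pos_iff.2 hx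
      rw [hf1def, hg2def]
      simp only []
      rw [hs, Real.rpow_add' (abs_nonneg _) (by positivity : p - 1 + δ/p ≠ 0)]
      rw [div_eq_mul_inv, ← Real.rpow_neg (norm_nonneg x), show -(p-1) = 1 - p by ring]
      ring
  have hH2 : ∫ x, f1 x * g2 x ≤ A ^ (1/p') * (∫ x, |u x| ^ δ) ^ (1/p) := by
    have h8 := integral_mul_le_Lp_mul_Lq_of_nonneg hconj (Filter.Eventually.of_forall hf1nn)
      (Filter.Eventually.of_forall hg2nn) hf1mem hg2mem
    have h9 : ∫ x, f1 x ^ p' = A :=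
      integral_congr_ae (Filter.Eventually.of_forall hf1pow)
    have h10 : ∫ x, g2 x ^ p = ∫ x, |u x| ^ δ := by
      apply integral_congr_ae (Filter.Eventually.of_forall _)
      intro x
      rw [hg2def]
      simp only []
      rw [← Real.rpow_mul (abs_nonneg _)]
      congr 1
      field_simp
    rw [h9, h10] at h8
    exact h8
  have hgradnorm : ∀ x : EuclideanSpace ℝ (Fin N), ‖gradient u x‖ = ‖fderiv ℝ u x‖ := fun x =>
    LinearIsometryEquiv.norm_map
      (InnerProductSpace.toDual ℝ (EuclideanSpace ℝ (Fin N))).symm (fderiv ℝ u x)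
  have hBgrad : ∫ x, ‖gradient u x‖ ^ p = B := by
    rw [hBdef]
    exact integral_congr_ae (Filter.Eventually.of_forall (fun x => by simp only [hgradnorm]))
  have hCnn : (0:ℝ) ≤ (∫ x, |u x| ^ δ) ^ (1/p) :=
    Real.rpow_nonneg (integral_nonneg (fun x => Real.rpow_nonneg (abs_nonneg _) _)) _
  calc ∫ x, |u x| ^ s / ‖x‖ ^ (p-1) = ∫ x, f1 x * g2 x :=
        integral_congr_ae (Filter.Eventually.of_forall hLpt)
    _ ≤ A ^ (1/p') * (∫ x, |u x| ^ δ) ^ (1/p) := hH2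
    _ ≤ ((p / ((N:ℝ) - p)) ^ (p-1) * B ^ (1/p')) * (∫ x, |u x| ^ δ) ^ (1/p) :=
        mul_le_mul_of_nonneg_right hardy hCnn
    _ = (p / ((N:ℝ) - p)) ^ (p-1) * (∫ x, ‖gradient u x‖ ^ p) ^ (1/p') *
          (∫ x, |u x| ^ δ) ^ (1/p) := by
        rw [hBgrad]
end

section
/- Let p = 2 and let ρ be a positive C¹ function on Ω which is weakly superharmonic, i.e. ∫_Ω ⟨∇ρ, ∇φ⟩ dx ≥ 0 for every nonnegative φ ∈ C_c^1(Ω). Suppose Λ > 0 is such that Λ ∫_Ω ρ u² dx ≤ ∫_Ω ρ |∇u|² dx for every u ∈ C_c^1(Ω). Then the Hardy inequality with remainder term ∫_Ω |∇u|² dx ≥ (1/4) ∫_Ω (u²/ρ²) |∇ρ|² dx + Λ ∫_Ω u² dx holds for every u ∈ C_c^1(Ω). -/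
open MeasureTheory
open scoped RealInnerProductSpace

section aux

variable {F : Type*} [NormedAddCommGroup F] [InnerProductSpace ℝ F] [CompleteSpace F]

lemma hasGradientAt_mul {f g : F → ℝ} {f' g' : F} {x : F}
    (hf : HasGradientAt f f' x) (hg : HasGradientAt g g' x) :
    HasGradientAt (fun y => f y * g y) (f x • g' + g x • f') x := by
  rw [hasGradientAt_iff_hasFDerivAt] at *
  simp only [map_add, _root_.map_smul]
  exact hf.mul hg

lemma hasGradientAt_sqrt_comp {ρ : F → ℝ} {b : F} {x : F}
    (hb : HasGradientAt ρ b x) (hpos : 0 < ρ x) :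
    HasGradientAt (fun y => Real.sqrt (ρ y)) ((1 / (2 * Real.sqrt (ρ x))) • b) x := by
  rw [hasGradientAt_iff_hasFDerivAt] at *
  have h1 : HasDerivAt Real.sqrt (1 / (2 * Real.sqrt (ρ x))) (ρ x) :=
    Real.hasDerivAt_sqrt hpos.ne'
  have := h1.comp_hasFDerivAt x hb
  rw [_root_.map_smul]
  exact this

lemma norm_smul_add_smul_sq (c d : ℝ) (a b : F) :
    ‖c • a + d • b‖ ^ 2 =
      c ^ 2 * ‖a‖ ^ 2 + 2 * c * d * ⟪a, b⟫ + d ^ 2 * ‖b‖ ^ 2 := by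
  rw [norm_add_sq_real, norm_smul, norm_smul, real_inner_smul_left, real_inner_smul_right]
  simp [mul_pow, sq_abs, Real.norm_eq_abs]
  ring

end aux

theorem stmt10 {N : ℕ} (hN : 1 ≤ N)
    (Ω : Set (EuclideanSpace ℝ (Fin N))) (hΩ : IsOpen Ω)
    (ρ : EuclideanSpace ℝ (Fin N) → ℝ)
    (hρ : ContDiffOn ℝ 1 ρ Ω)
    (hρ_pos : ∀ x ∈ Ω, 0 < ρ x)
    (hρ_sh : ∀ φ : EuclideanSpace ℝ (Fin N) → ℝ,
      ContDiff ℝ 1 φ → HasCompactSupport φ → tsupport φ ⊆ Ω → (∀ x, 0 ≤ φ x) →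
      0 ≤ ∫ x in Ω, ⟪gradient ρ x, gradient φ x⟫)
    (Λ : ℝ) (hΛ : 0 < Λ)
    (hΛ_ineq : ∀ u : EuclideanSpace ℝ (Fin N) → ℝ,
      ContDiff ℝ 1 u → HasCompactSupport u → tsupport u ⊆ Ω →
      Λ * ∫ x in Ω, ρ x * u x ^ 2 ≤ ∫ x in Ω, ρ x * ‖gradient u x‖ ^ 2)
    (u : EuclideanSpace ℝ (Fin N) → ℝ)
    (hu : ContDiff ℝ 1 u) (hu_supp : HasCompactSupport u)
    (hu_sub : tsupport u ⊆ Ω) :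
    (1 / 4) * (∫ x in Ω, (u x ^ 2 / ρ x ^ 2) * ‖gradient ρ x‖ ^ 2) +
        Λ * ∫ x in Ω, u x ^ 2 ≤
      ∫ x in Ω, ‖gradient u x‖ ^ 2 := by
  set v : EuclideanSpace ℝ (Fin N) → ℝ := fun x => u x / Real.sqrt (ρ x) with hv_def
  have hsupp_v : Function.support v ⊆ Function.support u := by
    intro x hx
    simp only [Function.mem_support] at *
    intro h
    apply hx
    show u x / Real.sqrt (ρ x) = 0
    rw [h, zero_div]
  have htsupp_v : tsupport v ⊆ tsupport u := closure_mono hsupp_v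
  have hv : ContDiff ℝ 1 v := by
    rw [contDiff_iff_contDiffAt]
    intro x
    by_cases hx : x ∈ Ω
    · have hρx : ContDiffAt ℝ 1 ρ x := hρ.contDiffAt (hΩ.mem_nhds hx)
      have hpos := hρ_pos x hx
      have h1 : ContDiffAt ℝ 1 (fun y => Real.sqrt (ρ y)) x :=
        (Real.contDiffAt_sqrt hpos.ne').comp x hρx
      exact hu.contDiffAt.div h1 (Real.sqrt_pos.mpr hpos).ne'
    · have hx' : x ∉ tsupport u := fun h => hx (hu_sub h)
      have h0 : v =ᶠ[nhds x] fun _ => (0 : ℝ) := by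
        filter_upwards [(isClosed_tsupport u).isOpen_compl.mem_nhds hx'] with y hy
        simp [hv_def, image_eq_zero_of_notMem_tsupport hy]
      exact (contDiffAt_const (c := (0 : ℝ))).congr_of_eventuallyEq h0
  have hv_cs : HasCompactSupport v := hu_supp.mono hsupp_v
  have htsv : tsupport v ⊆ Ω := htsupp_v.trans hu_sub
  set φ : EuclideanSpace ℝ (Fin N) → ℝ := fun x => v x * v x with hφ_def
  have hφ : ContDiff ℝ 1 φ := hv.mul hv
  have hsupp_φ : Function.support φ ⊆ Function.support v := by
    intro x hx
    simp only [Function.mem_support] at *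
    intro h; apply hx; show v x * v x = 0; rw [h, zero_mul]
  have hφ_cs : HasCompactSupport φ := hv_cs.mono hsupp_φ
  have htsφ : tsupport φ ⊆ Ω := ((closure_mono hsupp_φ).trans htsupp_v).trans hu_sub
  -- gradients vanish outside tsupport u
  have hgv0 : ∀ x, x ∉ tsupport u → gradient v x = 0 := by
    intro x hx
    have hx' : x ∉ tsupport v := fun h => hx (htsupp_v h)
    have h0 : v =ᶠ[nhds x] fun _ => (0 : ℝ) := by
      filter_upwards [(isClosed_tsupport v).isOpen_compl.mem_nhds hx'] with y hy
      exact image_eq_zero_of_notMem_tsupport hy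
    rw [h0.gradient_eq, gradient_fun_const]
  have hgφ0 : ∀ x, x ∉ tsupport u → gradient φ x = 0 := by
    intro x hx
    have hx' : x ∉ tsupport v := fun h => hx (htsupp_v h)
    have h0 : φ =ᶠ[nhds x] fun _ => (0 : ℝ) := by
      filter_upwards [(isClosed_tsupport v).isOpen_compl.mem_nhds hx'] with y hy
      simp [hφ_def, image_eq_zero_of_notMem_tsupport hy]
    rw [h0.gradient_eq, gradient_fun_const]
  -- continuity of gradients
  have hgradv_cont : Continuous (gradient v) :=
    ((InnerProductSpace.toDual ℝ _).symm.continuous).comp (hv.continuous_fderiv one_ne_zero)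
  have hgradφ_cont : Continuous (gradient φ) :=
    ((InnerProductSpace.toDual ℝ _).symm.continuous).comp (hφ.continuous_fderiv one_ne_zero)
  have hgradρ_cont : ContinuousOn (gradient ρ) Ω :=
    ((InnerProductSpace.toDual ℝ _).symm.continuous).comp_continuousOn
      (hρ.continuousOn_fderiv_of_isOpen hΩ le_rfl)
  -- the key pointwise identity
  have key : ∀ x ∈ Ω, ‖gradient u x‖ ^ 2 =
      ρ x * ‖gradient v x‖ ^ 2 +
        ((1 / 2) * ⟪gradient ρ x, gradient φ x⟫ +
          (1 / 4) * ((u x ^ 2 / ρ x ^ 2) * ‖gradient ρ x‖ ^ 2)) := by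
    intro x hx
    have hpos := hρ_pos x hx
    have hspos : 0 < Real.sqrt (ρ x) := Real.sqrt_pos.mpr hpos
    have hρdiff : DifferentiableAt ℝ ρ x :=
      (hρ.contDiffAt (hΩ.mem_nhds hx)).differentiableAt one_ne_zero
    have hb : HasGradientAt ρ (gradient ρ x) x := hρdiff.hasGradientAt
    have ha : HasGradientAt v (gradient v x) x :=
      (hv.differentiable one_ne_zero x).hasGradientAt
    have hs : HasGradientAt (fun y => Real.sqrt (ρ y))
        ((1 / (2 * Real.sqrt (ρ x))) • gradient ρ x) x :=
      hasGradientAt_sqrt_comp hb hpos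
    have hφg : HasGradientAt φ (v x • gradient v x + v x • gradient v x) x :=
      hasGradientAt_mul ha ha
    have hφx : gradient φ x = v x • gradient v x + v x • gradient v x := hφg.gradient
    have huv : u =ᶠ[nhds x] fun y => Real.sqrt (ρ y) * v y := by
      filter_upwards [hΩ.mem_nhds hx] with y hy
      have : Real.sqrt (ρ y) ≠ 0 := (Real.sqrt_pos.mpr (hρ_pos y hy)).ne'
      show u y = Real.sqrt (ρ y) * (u y / Real.sqrt (ρ y))
      field_simp
    have hgu : HasGradientAt u
        (Real.sqrt (ρ x) • gradient v x +
          v x • ((1 / (2 * Real.sqrt (ρ x))) • gradient ρ x)) x :=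
      (hasGradientAt_mul hs ha).congr_of_eventuallyEq huv
    rw [hgu.gradient]
    set S := Real.sqrt (ρ x) with hS_def
    have hS2 : S ^ 2 = ρ x := Real.sq_sqrt hpos.le
    have hSne : S ≠ 0 := hspos.ne'
    rw [hφx, smul_smul, norm_smul_add_smul_sq]
    simp only [inner_add_right, real_inner_smul_right]
    rw [real_inner_comm (gradient ρ x) (gradient v x)]
    have hvx : v x = u x / S := rfl
    rw [hvx, ← hS2]
    field_simp
    ring
  -- integrability
  have hIK : ∀ f : EuclideanSpace ℝ (Fin N) → ℝ, ContinuousOn f Ω →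
      (∀ x, x ∉ tsupport u → f x = 0) → IntegrableOn f Ω := by
    intro f hf h0
    have hK : IsCompact (tsupport u) := hu_supp
    have h1 : IntegrableOn f (tsupport u) := (hf.mono hu_sub).integrableOn_compact hK
    have h2 : IntegrableOn f (Ω \ tsupport u) := by
      rw [integrableOn_congr_fun (g := fun _ => (0 : ℝ)) (fun x hx => h0 x hx.2)
        (hΩ.measurableSet.diff (isClosed_tsupport u).measurableSet)]
      exact integrableOn_zero
    refine (h1.union h2).mono_set fun x hx => ?_
    by_cases h : x ∈ tsupport u
    · exact Or.inl h
    · exact Or.inr ⟨hx, h⟩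
  have i1 : IntegrableOn (fun x => ρ x * ‖gradient v x‖ ^ 2) Ω := by
    apply hIK _ (hρ.continuousOn.mul ((hgradv_cont.norm.pow 2).continuousOn))
    intro x hx; simp [hgv0 x hx]
  have i2 : IntegrableOn (fun x => ⟪gradient ρ x, gradient φ x⟫) Ω := by
    apply hIK _ (hgradρ_cont.inner hgradφ_cont.continuousOn)
    intro x hx; simp [hgφ0 x hx]
  have i3 : IntegrableOn (fun x => (u x ^ 2 / ρ x ^ 2) * ‖gradient ρ x‖ ^ 2) Ω := by
    apply hIK _ (((hu.continuous.continuousOn.pow 2).div (hρ.continuousOn.pow 2)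
      (fun x hx => pow_ne_zero 2 (hρ_pos x hx).ne')).mul ((hgradρ_cont.norm.pow 2)))
    intro x hx; simp [image_eq_zero_of_notMem_tsupport hx]
  -- split the integral
  have hsplit : ∫ x in Ω, ‖gradient u x‖ ^ 2 =
      (∫ x in Ω, ρ x * ‖gradient v x‖ ^ 2) +
        ((1 / 2) * (∫ x in Ω, ⟪gradient ρ x, gradient φ x⟫) +
          (1 / 4) * (∫ x in Ω, (u x ^ 2 / ρ x ^ 2) * ‖gradient ρ x‖ ^ 2)) := by
    rw [MeasureTheory.setIntegral_congr_fun hΩ.measurableSet key]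
    have ha : IntegrableOn (fun x => (1/2 : ℝ) * ⟪gradient ρ x, gradient φ x⟫) Ω :=
      i2.const_mul _
    have hb : IntegrableOn
        (fun x => (1/4 : ℝ) * ((u x ^ 2 / ρ x ^ 2) * ‖gradient ρ x‖ ^ 2)) Ω :=
      i3.const_mul _
    have h2' : IntegrableOn (fun x => (1/2 : ℝ) * ⟪gradient ρ x, gradient φ x⟫ +
        (1/4 : ℝ) * ((u x ^ 2 / ρ x ^ 2) * ‖gradient ρ x‖ ^ 2)) Ω := ha.add hb
    rw [MeasureTheory.integral_add i1 h2', MeasureTheory.integral_add ha hb,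
      MeasureTheory.integral_const_mul, MeasureTheory.integral_const_mul]
  -- apply the two hypotheses
  have hEq1 : ∫ x in Ω, ρ x * v x ^ 2 = ∫ x in Ω, u x ^ 2 := by
    apply MeasureTheory.setIntegral_congr_fun hΩ.measurableSet
    intro x hx
    have hpos := hρ_pos x hx
    have hsq : Real.sqrt (ρ x) ^ 2 = ρ x := Real.sq_sqrt hpos.le
    simp only [hv_def, div_pow, hsq]
    field_simp
  have h1 := hΛ_ineq v hv hv_cs htsv
  rw [hEq1] at h1
  have h2 := hρ_sh φ hφ hφ_cs htsφ (fun x => mul_self_nonneg _)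
  linarith
end

section
/- (Hardy–Sobolev inequality.) Let p* > 0, S > 0, H > 0, θ ∈ ℝ, and let ρ be a positive smooth function on Ω. Assume the Sobolev inequality S (∫_Ω |u|^{p*} dx)^{1/p*} ≤ (∫_Ω |∇u|^p dx)^{1/p} and the weighted Hardy inequality H ∫_Ω ρ^{pθ−p} |u|^p |∇ρ|^p dx ≤ ∫_Ω ρ^{pθ} |∇u|^p dx both hold for every u ∈ C_c^1(Ω). Then, with C₂ = S·H^{1/p}/(|θ| + H^{1/p}), the weighted Sobolev inequality C₂ (∫_Ω ρ^{p*θ} |u|^{p*} dx)^{1/p*} ≤ (∫_Ω ρ^{pθ} |∇u|^p dx)^{1/p} holds for every u ∈ C_c^∞(Ω). -/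
open MeasureTheory

private lemma minkowski_aux {α : Type*} [MeasurableSpace α] {μ : Measure α} {p : ℝ} (hp : 1 ≤ p)
    {h f g : α → ℝ} (hh : AEStronglyMeasurable h μ)
    (hf0 : 0 ≤ᵐ[μ] f) (hg0 : 0 ≤ᵐ[μ] g)
    (hle : ∀ᵐ x ∂μ, |h x| ≤ f x + g x)
    (hf : MemLp f (ENNReal.ofReal p) μ) (hg : MemLp g (ENNReal.ofReal p) μ) :
    (∫ x, |h x| ^ p ∂μ) ^ (1 / p) ≤
      (∫ x, f x ^ p ∂μ) ^ (1 / p) + (∫ x, g x ^ p ∂μ) ^ (1 / p) := by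
  have hp0 : (0:ℝ) < p := lt_of_lt_of_le one_pos hp
  set P : ENNReal := ENNReal.ofReal p with hP
  have hP0 : P ≠ 0 := by
    simp only [hP, ne_eq, ENNReal.ofReal_eq_zero, not_le]; linarith
  have hPtop : P ≠ ⊤ := ENNReal.ofReal_ne_top
  have hPt : P.toReal = p := ENNReal.toReal_ofReal hp0.le
  have hP1 : 1 ≤ P := by
    rw [hP, ← ENNReal.ofReal_one]; exact ENNReal.ofReal_le_ofReal hp
  have habs : ∀ᵐ x ∂μ, ‖h x‖ ≤ ‖(f + g) x‖ := by
    filter_upwards [hle, hf0, hg0] with x h1 h2 h3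
    simpa [Real.norm_eq_abs, abs_of_nonneg (add_nonneg h2 h3)] using h1
  have hfg : MemLp (f + g) P μ := hf.add hg
  have hhm : MemLp h P μ := hfg.of_le hh habs
  have key : eLpNorm h P μ ≤ eLpNorm f P μ + eLpNorm g P μ :=
    le_trans (eLpNorm_mono_ae habs) (eLpNorm_add_le hf.1 hg.1 hP1)
  rw [hhm.eLpNorm_eq_integral_rpow_norm hP0 hPtop,
    hf.eLpNorm_eq_integral_rpow_norm hP0 hPtop,
    hg.eLpNorm_eq_integral_rpow_norm hP0 hPtop,
    ← ENNReal.ofReal_add (by positivity) (by positivity)] at key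
  have key2 := (ENNReal.ofReal_le_ofReal_iff (by positivity)).mp key
  have e1 : ∫ x, ‖h x‖ ^ P.toReal ∂μ = ∫ x, |h x| ^ p ∂μ := by
    simp [Real.norm_eq_abs, hPt]
  have e2 : ∫ x, ‖f x‖ ^ P.toReal ∂μ = ∫ x, f x ^ p ∂μ := by
    rw [hPt]; exact integral_congr_ae (by filter_upwards [hf0] with x hx; rw [Real.norm_of_nonneg hx])
  have e3 : ∫ x, ‖g x‖ ^ P.toReal ∂μ = ∫ x, g x ^ p ∂μ := by
    rw [hPt]; exact integral_congr_ae (by filter_upwards [hg0] with x hx; rw [Real.norm_of_nonneg hx])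
  rw [e1, e2, e3, hPt] at key2
  simpa [one_div] using key2

theorem stmt12 {N : ℕ} (hN : 1 ≤ N) (p : ℝ) (hp : 1 < p)
    (Ω : Set (EuclideanSpace ℝ (Fin N))) (hΩ : IsOpen Ω)
    (pstar S H θ : ℝ) (hpstar : 0 < pstar) (hS : 0 < S) (hH : 0 < H)
    (ρ : EuclideanSpace ℝ (Fin N) → ℝ)
    (hρ : ContDiffOn ℝ (⊤ : ℕ∞) ρ Ω)
    (hρ_pos : ∀ x ∈ Ω, 0 < ρ x)
    (hSob : ∀ u : EuclideanSpace ℝ (Fin N) → ℝ,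
      ContDiff ℝ 1 u → HasCompactSupport u → tsupport u ⊆ Ω →
      S * (∫ x in Ω, |u x| ^ pstar) ^ (1 / pstar) ≤
        (∫ x in Ω, ‖gradient u x‖ ^ p) ^ (1 / p))
    (hHardy : ∀ u : EuclideanSpace ℝ (Fin N) → ℝ,
      ContDiff ℝ 1 u → HasCompactSupport u → tsupport u ⊆ Ω →
      H * ∫ x in Ω, ρ x ^ (p * θ - p) * |u x| ^ p * ‖gradient ρ x‖ ^ p ≤
        ∫ x in Ω, ρ x ^ (p * θ) * ‖gradient u x‖ ^ p)
    (C₂ : ℝ) (hC₂ : C₂ = S * H ^ (1 / p) / (|θ| + H ^ (1 / p)))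
    (u : EuclideanSpace ℝ (Fin N) → ℝ)
    (hu : ContDiff ℝ (⊤ : ℕ∞) u) (hu_supp : HasCompactSupport u)
    (hu_sub : tsupport u ⊆ Ω) :
    C₂ * (∫ x in Ω, ρ x ^ (pstar * θ) * |u x| ^ pstar) ^ (1 / pstar) ≤
      (∫ x in Ω, ρ x ^ (p * θ) * ‖gradient u x‖ ^ p) ^ (1 / p) := by
  have hp0 : (0:ℝ) < p := lt_trans one_pos hp
  have hng : ∀ (w : EuclideanSpace ℝ (Fin N) → ℝ) (x), ‖gradient w x‖ = ‖fderiv ℝ w x‖ :=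
    fun w x => LinearIsometryEquiv.norm_map _ _
  set K := tsupport u with hKdef
  have hKΩ : K ⊆ Ω := hu_sub
  have hKc : IsCompact K := hu_supp
  -- vanishing off K
  have huz : ∀ x, x ∉ K → u x = 0 := fun x hx => image_eq_zero_of_notMem_tsupport hx
  have huev : ∀ x, x ∉ K → u =ᶠ[nhds x] 0 := by
    intro x hx
    filter_upwards [(isClosed_tsupport u).isOpen_compl.mem_nhds hx] with y hy
    exact huz y hy
  have hgu0 : ∀ x, x ∉ K → gradient u x = 0 := by
    intro x hx
    have hfz : fderiv ℝ u x = 0 := by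
      rw [(huev x hx).fderiv_eq]; exact fderiv_const_apply 0
    show (InnerProductSpace.toDual ℝ _).symm (fderiv ℝ u x) = 0
    rw [hfz]; simp
  -- the test function v
  set v : EuclideanSpace ℝ (Fin N) → ℝ := fun x => ρ x ^ θ * u x with hvdef
  have hvz : ∀ x, x ∉ K → v x = 0 := by intro x hx; simp [hvdef, huz x hx]
  have hv : ContDiff ℝ 1 v := by
    rw [contDiff_iff_contDiffAt]
    intro x
    by_cases hx : x ∈ Ω
    · have h1 : ContDiffAt ℝ 1 ρ x := (hρ.contDiffAt (hΩ.mem_nhds hx)).of_le (by exact_mod_cast le_top)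
      exact (h1.rpow_const_of_ne (hρ_pos x hx).ne').mul ((hu.of_le (by exact_mod_cast le_top)).contDiffAt)
    · have hxK : x ∉ K := fun h => hx (hKΩ h)
      have hev : v =ᶠ[nhds x] (fun _ => 0) := by
        filter_upwards [(isClosed_tsupport u).isOpen_compl.mem_nhds hxK] with y hy
        simp [hvdef, huz y hy]
      exact (contDiffAt_const (c := (0:ℝ))).congr_of_eventuallyEq hev
  have hv_supp : HasCompactSupport v :=
    HasCompactSupport.intro hKc hvz
  have hv_sub : tsupport v ⊆ Ω := by
    refine Set.Subset.trans ?_ hu_sub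
    apply closure_mono
    intro x hx
    simp only [Function.mem_support] at hx ⊢
    intro h0; exact hx (by simp [hvdef, h0])
  -- continuity of auxiliary functions
  set Fn : EuclideanSpace ℝ (Fin N) → ℝ :=
    fun x => |θ| * (ρ x ^ (θ - 1) * ‖gradient ρ x‖ * |u x|) with hFdef
  set Gn : EuclideanSpace ℝ (Fin N) → ℝ := fun x => ρ x ^ θ * ‖gradient u x‖ with hGdef
  have hFz : ∀ x, x ∉ K → Fn x = 0 := by intro x hx; simp [hFdef, huz x hx]
  have hGz : ∀ x, x ∉ K → Gn x = 0 := by intro x hx; simp [hGdef, hgu0 x hx]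
  have hgρc : ContinuousOn (fun x => gradient ρ x) Ω := by
    have h1 : ContinuousOn (fderiv ℝ ρ) Ω :=
      hρ.continuousOn_fderiv_of_isOpen hΩ (by exact_mod_cast le_top)
    exact ((InnerProductSpace.toDual ℝ _).symm.continuous.comp_continuousOn h1)
  have hρc : ContinuousOn ρ Ω := hρ.continuousOn
  have hFnΩ : ContinuousOn Fn Ω := by
    apply ContinuousOn.mul continuousOn_const
    exact ((hρc.rpow_const (fun x hx => Or.inl (hρ_pos x hx).ne')).mul hgρc.norm).mul
      (hu.continuous.abs.continuousOn)
  have hGnΩ : ContinuousOn Gn Ω := by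
    apply ContinuousOn.mul (hρc.rpow_const (fun x hx => Or.inl (hρ_pos x hx).ne'))
    have : Continuous fun x => gradient u x :=
      (InnerProductSpace.toDual ℝ _).symm.continuous.comp (hu.continuous_fderiv (by simp))
    exact this.norm.continuousOn
  have cont_of : ∀ w : EuclideanSpace ℝ (Fin N) → ℝ,
      ContinuousOn w Ω → (∀ x, x ∉ K → w x = 0) → Continuous w := by
    intro w hwΩ hwz
    rw [continuous_iff_continuousAt]
    intro x
    by_cases hx : x ∈ Ω
    · exact hwΩ.continuousAt (hΩ.mem_nhds hx)
    · have hxK : x ∉ K := fun h => hx (hKΩ h)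
      have hev : w =ᶠ[nhds x] (fun _ => 0) := by
        filter_upwards [(isClosed_tsupport u).isOpen_compl.mem_nhds hxK] with y hy
        exact hwz y hy
      exact ContinuousAt.congr (continuousAt_const (y := (0:ℝ))) hev.symm
  have hFc : Continuous Fn := cont_of Fn hFnΩ hFz
  have hGc : Continuous Gn := cont_of Gn hGnΩ hGz
  have hFsupp : HasCompactSupport Fn := HasCompactSupport.intro hKc hFz
  have hGsupp : HasCompactSupport Gn := HasCompactSupport.intro hKc hGz
  have hFmem : MemLp Fn (ENNReal.ofReal p) (volume.restrict Ω) :=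
    (hFc.memLp_of_hasCompactSupport hFsupp).restrict _
  have hGmem : MemLp Gn (ENNReal.ofReal p) (volume.restrict Ω) :=
    (hGc.memLp_of_hasCompactSupport hGsupp).restrict _
  have hFnonneg : ∀ x ∈ Ω, 0 ≤ Fn x := by
    intro x hx
    have := (Real.rpow_pos_of_pos (hρ_pos x hx) (θ - 1)).le
    simp only [hFdef]; positivity
  have hGnonneg : ∀ x ∈ Ω, 0 ≤ Gn x := by
    intro x hx
    have := (Real.rpow_pos_of_pos (hρ_pos x hx) θ).le
    simp only [hGdef]; positivity
  -- gradient bound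
  have hgrad_bound : ∀ x ∈ Ω, ‖gradient v x‖ ≤ Fn x + Gn x := by
    intro x hx
    have hρx := hρ_pos x hx
    have hdρ : HasFDerivAt ρ (fderiv ℝ ρ x) x :=
      (((hρ.contDiffAt (hΩ.mem_nhds hx)).of_le (m := 1) (by exact_mod_cast le_top)).differentiableAt one_ne_zero).hasFDerivAt
    have hdρθ : HasFDerivAt (fun y => ρ y ^ θ) ((θ * ρ x ^ (θ - 1)) • fderiv ℝ ρ x) x :=
      hdρ.rpow_const (Or.inl hρx.ne')
    have hdu : HasFDerivAt u (fderiv ℝ u x) x := (hu.differentiable (by simp) x).hasFDerivAt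
    have hdv : HasFDerivAt v
        (ρ x ^ θ • fderiv ℝ u x + u x • ((θ * ρ x ^ (θ - 1)) • fderiv ℝ ρ x)) x :=
      hdρθ.mul hdu
    calc ‖gradient v x‖ = ‖fderiv ℝ v x‖ := hng v x
      _ = ‖ρ x ^ θ • fderiv ℝ u x + u x • ((θ * ρ x ^ (θ - 1)) • fderiv ℝ ρ x)‖ := by
          rw [hdv.fderiv]
      _ ≤ ‖ρ x ^ θ • fderiv ℝ u x‖ + ‖u x • ((θ * ρ x ^ (θ - 1)) • fderiv ℝ ρ x)‖ :=
          norm_add_le _ _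
      _ = Fn x + Gn x := by
          rw [norm_smul, norm_smul, norm_smul, Real.norm_eq_abs, Real.norm_eq_abs,
            Real.norm_eq_abs, abs_of_pos (Real.rpow_pos_of_pos hρx θ), abs_mul,
            abs_of_pos (Real.rpow_pos_of_pos hρx (θ - 1)), ← hng u x, ← hng ρ x,
            hFdef, hGdef]
          ring
  -- Minkowski
  have hvgradc : Continuous fun x => ‖gradient v x‖ := by
    have : Continuous fun x => gradient v x :=
      (InnerProductSpace.toDual ℝ _).symm.continuous.comp (hv.continuous_fderiv one_ne_zero)
    exact this.norm
  have hmink :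
      (∫ x in Ω, |‖gradient v x‖| ^ p) ^ (1 / p) ≤
        (∫ x in Ω, Fn x ^ p) ^ (1 / p) + (∫ x in Ω, Gn x ^ p) ^ (1 / p) := by
    apply minkowski_aux hp.le hvgradc.aestronglyMeasurable
    · exact ae_restrict_of_forall_mem hΩ.measurableSet hFnonneg
    · exact ae_restrict_of_forall_mem hΩ.measurableSet hGnonneg
    · refine ae_restrict_of_forall_mem hΩ.measurableSet ?_
      intro x hx
      rw [abs_norm]
      exact hgrad_bound x hx
    · exact hFmem
    · exact hGmem
  simp only [abs_norm] at hmink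
  -- Sobolev applied to v
  have hsob := hSob v hv hv_supp hv_sub
  have hA : ∫ x in Ω, |v x| ^ pstar = ∫ x in Ω, ρ x ^ (pstar * θ) * |u x| ^ pstar := by
    apply setIntegral_congr_fun hΩ.measurableSet
    intro x hx
    have hρx := hρ_pos x hx
    rw [hvdef]
    simp only
    rw [abs_mul, abs_of_pos (Real.rpow_pos_of_pos hρx θ),
      Real.mul_rpow (Real.rpow_pos_of_pos hρx θ).le (abs_nonneg _),
      ← Real.rpow_mul hρx.le, mul_comm θ pstar]
  rw [hA] at hsob
  -- Hardy applied to u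
  have hhar := hHardy u (hu.of_le (by exact_mod_cast le_top)) hu_supp hu_sub
  set B : ℝ := ∫ x in Ω, ρ x ^ (p * θ) * ‖gradient u x‖ ^ p with hBdef
  have hB0 : 0 ≤ B := by
    apply setIntegral_nonneg hΩ.measurableSet
    intro x hx
    have := (Real.rpow_pos_of_pos (hρ_pos x hx) (p * θ)).le
    positivity
  -- ∫ Fn ^ p
  have hFint : ∫ x in Ω, Fn x ^ p =
      |θ| ^ p * ∫ x in Ω, ρ x ^ (p * θ - p) * |u x| ^ p * ‖gradient ρ x‖ ^ p := by
    rw [← integral_const_mul]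
    apply setIntegral_congr_fun hΩ.measurableSet
    intro x hx
    have hρx := hρ_pos x hx
    have h2 : (0:ℝ) ≤ ρ x ^ (θ - 1) := (Real.rpow_pos_of_pos hρx _).le
    rw [hFdef]
    simp only
    rw [Real.mul_rpow (abs_nonneg θ) (by positivity),
      Real.mul_rpow (by positivity) (abs_nonneg _),
      Real.mul_rpow h2 (norm_nonneg _),
      ← Real.rpow_mul hρx.le, show (θ - 1) * p = p * θ - p by ring]
    ring
  have hGint : ∫ x in Ω, Gn x ^ p = B := by
    rw [hBdef]
    apply setIntegral_congr_fun hΩ.measurableSet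
    intro x hx
    have hρx := hρ_pos x hx
    rw [hGdef]
    simp only
    rw [Real.mul_rpow (Real.rpow_pos_of_pos hρx θ).le (norm_nonneg _),
      ← Real.rpow_mul hρx.le, mul_comm θ p]
  -- bound on ∫ Fn ^ p
  have hFle : ∫ x in Ω, Fn x ^ p ≤ |θ| ^ p * (B / H) := by
    rw [hFint]
    have h1 : ∫ x in Ω, ρ x ^ (p * θ - p) * |u x| ^ p * ‖gradient ρ x‖ ^ p ≤ B / H := by
      rw [le_div_iff₀ hH, mul_comm]
      exact hhar
    exact mul_le_mul_of_nonneg_left h1 (by positivity)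
  have hFint0 : 0 ≤ ∫ x in Ω, Fn x ^ p := by
    apply setIntegral_nonneg hΩ.measurableSet
    intro x hx
    exact Real.rpow_nonneg (hFnonneg x hx) p
  -- combine
  have hpne : p ≠ 0 := hp0.ne'
  have hHp : (0:ℝ) < H ^ (1 / p) := Real.rpow_pos_of_pos hH _
  have hF1p : (∫ x in Ω, Fn x ^ p) ^ (1 / p) ≤ |θ| * B ^ (1 / p) / H ^ (1 / p) := by
    calc (∫ x in Ω, Fn x ^ p) ^ (1 / p) ≤ (|θ| ^ p * (B / H)) ^ (1 / p) :=
          Real.rpow_le_rpow hFint0 hFle (by positivity)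
      _ = |θ| * B ^ (1 / p) / H ^ (1 / p) := by
          rw [Real.mul_rpow (by positivity) (div_nonneg hB0 hH.le),
            ← Real.rpow_mul (abs_nonneg θ), mul_one_div_cancel hpne, Real.rpow_one,
            Real.div_rpow hB0 hH.le, mul_div_assoc]
  set A' : ℝ := (∫ x in Ω, ρ x ^ (pstar * θ) * |u x| ^ pstar) ^ (1 / pstar) with hA'def
  set b : ℝ := B ^ (1 / p) with hbdef
  have hchain : S * A' ≤ |θ| * b / H ^ (1 / p) + b := by
    calc S * A' ≤ (∫ x in Ω, ‖gradient v x‖ ^ p) ^ (1 / p) := hsob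
      _ ≤ (∫ x in Ω, Fn x ^ p) ^ (1 / p) + (∫ x in Ω, Gn x ^ p) ^ (1 / p) := hmink
      _ ≤ |θ| * b / H ^ (1 / p) + b := by
          rw [hGint]
          exact add_le_add hF1p le_rfl
  have hc : (0:ℝ) < |θ| + H ^ (1 / p) := by positivity
  have h5 : S * A' * H ^ (1 / p) ≤ (|θ| * b / H ^ (1 / p) + b) * H ^ (1 / p) :=
    mul_le_mul_of_nonneg_right hchain hHp.le
  have h6 : (|θ| * b / H ^ (1 / p) + b) * H ^ (1 / p) = b * (|θ| + H ^ (1 / p)) := by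
    field_simp
  rw [h6] at h5
  rw [hC₂, div_mul_eq_mul_div, div_le_iff₀ hc]
  calc S * H ^ (1 / p) * A' = S * A' * H ^ (1 / p) := by ring
    _ ≤ b * (|θ| + H ^ (1 / p)) := h5
end

section
/- Let N ≥ 2, p > 1, α ∈ ℝ, and let ℝ^N₊ = {x = (x₁, …, x_N) ∈ ℝ^N : x₁ > 0} be the open half-space, so that the distance of x ∈ ℝ^N₊ from the boundary is x₁. Then for every u ∈ C_c^∞(ℝ^N₊): (|p−1−α|/p)^p ∫_{ℝ^N₊} x₁^{α−p} |u(x)|^p dx ≤ ∫_{ℝ^N₊} x₁^α |∇u(x)|^p dx. -/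
open MeasureTheory Real Set Filter Topology
open scoped ENNReal NNReal


lemma habs_cont {p : ℝ} (hp : 1 < p) : Continuous fun t : ℝ => |t| ^ (p - 2) * t := by
  have hbound : ∀ t : ℝ, ‖|t| ^ (p - 2) * t‖ ≤ |t| ^ (p - 1) := by
    intro t
    rcases eq_or_ne t 0 with rfl | ht
    · simp [Real.zero_rpow (by linarith : p - 1 ≠ 0)]
    · have habs : (0:ℝ) < |t| := abs_pos.2 ht
      rw [Real.norm_eq_abs, abs_mul, abs_of_nonneg (Real.rpow_nonneg (abs_nonneg t) _)]
      rw [show p - 1 = p - 2 + 1 by ring, Real.rpow_add_one (ne_of_gt habs)]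
  rw [continuous_iff_continuousAt]
  intro t
  rcases eq_or_ne t 0 with rfl | ht
  · have h0 : |(0:ℝ)| ^ (p - 2) * 0 = 0 := by simp
    rw [ContinuousAt, h0]
    have hb : Continuous fun t : ℝ => |t| ^ (p - 1) :=
      continuous_abs.rpow_const (fun x => Or.inr (by linarith))
    exact squeeze_zero_norm hbound
      (hb.tendsto' 0 0 (by simp [Real.zero_rpow (by linarith : p - 1 ≠ 0)]))
  · exact (((Real.continuousAt_rpow_const _ _ (Or.inl (abs_ne_zero.2 ht))).comp
      continuous_abs.continuousAt)).mul continuousAt_id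

lemma habs_deriv {p : ℝ} (hp : 1 < p) (t : ℝ) :
    HasDerivAt (fun s : ℝ => |s| ^ p) (p * (|t| ^ (p - 2) * t)) t := by
  rcases lt_trichotomy t 0 with ht | rfl | ht
  · have h1 : HasDerivAt (fun s : ℝ => (-s) ^ p) (p * (-t) ^ (p - 1) * (-1)) t := by
      have h2 := Real.hasDerivAt_rpow_const (x := -t) (p := p) (Or.inl (by linarith))
      simpa [Function.comp_def] using h2.comp t (hasDerivAt_neg t)
    have heq : (fun s : ℝ => |s| ^ p) =ᶠ[𝓝 t] fun s => (-s) ^ p := by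
      filter_upwards [Iio_mem_nhds ht] with s hs
      rw [abs_of_neg hs]
    have h3 := h1.congr_of_eventuallyEq heq
    have hv : p * (-t) ^ (p - 1) * (-1) = p * (|t| ^ (p - 2) * t) := by
      rw [abs_of_neg ht, show p - 1 = p - 2 + 1 by ring,
        Real.rpow_add_one (ne_of_gt (neg_pos.2 ht))]
      ring
    rwa [hv] at h3
  · have h0 : p * (|(0:ℝ)| ^ (p - 2) * 0) = 0 := by simp
    rw [h0]
    rw [hasDerivAt_iff_tendsto_slope]
    have hb : Continuous fun s : ℝ => |s| ^ (p - 1) :=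
      continuous_abs.rpow_const (fun x => Or.inr (by linarith))
    apply squeeze_zero_norm' ?_
      ((hb.tendsto' 0 0 (by simp [Real.zero_rpow (by linarith : p - 1 ≠ 0)])).mono_left
        nhdsWithin_le_nhds)
    filter_upwards [self_mem_nhdsWithin] with s hs
    have hs0 : s ≠ 0 := hs
    have habs : (0:ℝ) < |s| := abs_pos.2 hs0
    rw [slope_def_field]
    have : (|s| ^ p - |(0:ℝ)| ^ p) / (s - 0) = |s| ^ p / s := by
      simp [Real.zero_rpow (by linarith : p ≠ 0)]
    rw [this, Real.norm_eq_abs, abs_div,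
      abs_of_nonneg (Real.rpow_nonneg (abs_nonneg s) _)]
    have h4 : |s| ^ p / |s| ^ (1:ℝ) = |s| ^ (p - 1) := (Real.rpow_sub habs p 1).symm
    rw [Real.rpow_one] at h4
    rw [h4]
  · have h1 := Real.hasDerivAt_rpow_const (x := t) (p := p) (Or.inl (ne_of_gt ht))
    have heq : (fun s : ℝ => |s| ^ p) =ᶠ[𝓝 t] fun s => s ^ p := by
      filter_upwards [Ioi_mem_nhds ht] with s hs
      rw [abs_of_pos hs]
    have h3 := h1.congr_of_eventuallyEq heq
    have hv : p * t ^ (p - 1) = p * (|t| ^ (p - 2) * t) := by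
      rw [abs_of_pos ht, show p - 1 = p - 2 + 1 by ring,
        Real.rpow_add_one (ne_of_gt ht)]
    rwa [hv] at h3

set_option maxHeartbeats 1000000 in
theorem stmt17 {N : ℕ} (hN : 2 ≤ N) (p : ℝ) (hp : 1 < p) (α : ℝ)
    (u : EuclideanSpace ℝ (Fin N) → ℝ)
    (hu : ContDiff ℝ (⊤ : ℕ∞) u) (hu_supp : HasCompactSupport u)
    (hu_sub : tsupport u ⊆ {x : EuclideanSpace ℝ (Fin N) | 0 < x ⟨0, by omega⟩}) :
    (|p - 1 - α| / p) ^ p *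
        ∫ x in {x : EuclideanSpace ℝ (Fin N) | 0 < x ⟨0, by omega⟩},
          (x ⟨0, by omega⟩) ^ (α - p) * |u x| ^ p ≤
      ∫ x in {x : EuclideanSpace ℝ (Fin N) | 0 < x ⟨0, by omega⟩},
        (x ⟨0, by omega⟩) ^ α * ‖gradient u x‖ ^ p := by
  classical
  have hN0 : 0 < N := by omega
  set i : Fin N := ⟨0, hN0⟩ with hidef
  set S : Set (EuclideanSpace ℝ (Fin N)) := {x | 0 < x i} with hSdef
  have hp0 : (0:ℝ) < p := by linarith
  have hp0' : p ≠ 0 := ne_of_gt hp0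
  have hp1 : (0:ℝ) < p - 1 := by linarith
  have hp1' : p - 1 ≠ 0 := ne_of_gt hp1
  set q : ℝ := p / (p - 1) with hqdef
  have hq0 : 0 < q := by positivity
  have hq0' : q ≠ 0 := ne_of_gt hq0
  have hpq : p.HolderConjugate q := (Real.holderConjugate_iff_eq_conjExponent hp).2 hqdef
  set c : ℝ := α - p + 1 with hcdef
  set e : EuclideanSpace ℝ (Fin N) := EuclideanSpace.single i 1 with hedef
  set du : EuclideanSpace ℝ (Fin N) → ℝ := fun x => fderiv ℝ u x e with hdudef
  have husub : tsupport u ⊆ S := hu_sub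
  have hu_zero : ∀ x ∉ tsupport u, u x = 0 := fun x hx => image_eq_zero_of_notMem_tsupport hx
  have hopen : IsOpen (tsupport u)ᶜ := (isClosed_tsupport u).isOpen_compl
  have heventually : ∀ x ∉ tsupport u, u =ᶠ[𝓝 x] (fun _ => 0) :=
    fun x hx => eventually_of_mem (hopen.mem_nhds hx) (fun y hy => hu_zero y hy)
  have hdiff : Differentiable ℝ u := hu.differentiable (by simp)
  have hfcont : Continuous (fderiv ℝ u) := hu.continuous_fderiv (by simp)
  have hdu_cont : Continuous du := hfcont.clm_apply continuous_const
  have hdu_zero : ∀ x ∉ tsupport u, du x = 0 := by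
    intro x hx
    show fderiv ℝ u x e = 0
    rw [(heventually x hx).fderiv_eq, fderiv_const_apply, ContinuousLinearMap.zero_apply]
  have hgradu : ∀ x, gradient u x = (InnerProductSpace.toDual ℝ _).symm (fderiv ℝ u x) :=
    fun _ => rfl
  have hgrad_zero : ∀ x ∉ tsupport u, gradient u x = 0 := by
    intro x hx
    rw [hgradu x, (heventually x hx).fderiv_eq, fderiv_const_apply, map_zero]
  have hdu_le : ∀ x, |du x| ≤ ‖gradient u x‖ := by
    intro x
    have h1 : du x = inner (𝕜 := ℝ) (gradient u x) e := by
      rw [hgradu x, InnerProductSpace.toDual_symm_apply]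
    rw [h1]
    calc |inner (𝕜 := ℝ) (gradient u x) e| ≤ ‖gradient u x‖ * ‖e‖ := abs_real_inner_le_norm _ _
    _ = ‖gradient u x‖ := by rw [hedef, EuclideanSpace.norm_single, norm_one, mul_one]
  -- helpers
  have hproj_cont : Continuous fun x : EuclideanSpace ℝ (Fin N) => x i :=
    (EuclideanSpace.proj (𝕜 := ℝ) i).continuous
  have hmk_cont : ∀ (f : EuclideanSpace ℝ (Fin N) → ℝ), (∀ x ∈ S, ContinuousAt f x) →
      (∀ x ∉ tsupport u, f x = 0) → Continuous f := by
    intro f hfS hf0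
    rw [continuous_iff_continuousAt]
    intro x
    by_cases hx : x ∈ S
    · exact hfS x hx
    · have hx' : x ∉ tsupport u := fun h => hx (husub h)
      have hev : f =ᶠ[𝓝 x] fun _ => 0 :=
        eventually_of_mem (hopen.mem_nhds hx') (fun y hy => hf0 y hy)
      exact continuousAt_const.congr hev.symm
  have hmk_supp : ∀ (f : EuclideanSpace ℝ (Fin N) → ℝ), (∀ x ∉ tsupport u, f x = 0) →
      HasCompactSupport f := fun f hf0 => HasCompactSupport.intro hu_supp hf0
  have hmk_int : ∀ (f : EuclideanSpace ℝ (Fin N) → ℝ), (∀ x ∈ S, ContinuousAt f x) →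
      (∀ x ∉ tsupport u, f x = 0) → Integrable f := fun f h1 h2 =>
    (hmk_cont f h1 h2).integrable_of_hasCompactSupport (hmk_supp f h2)
  have hmk_memLp : ∀ (f : EuclideanSpace ℝ (Fin N) → ℝ) (r : ℝ≥0∞), (∀ x ∈ S, ContinuousAt f x) →
      (∀ x ∉ tsupport u, f x = 0) → MemLp f r := fun f r h1 h2 =>
    (hmk_cont f h1 h2).memLp_of_hasCompactSupport (hmk_supp f h2)
  have hrpowS : ∀ (r : ℝ) (x : EuclideanSpace ℝ (Fin N)), x ∈ S →
      ContinuousAt (fun y : EuclideanSpace ℝ (Fin N) => (y i) ^ r) x := by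
    intro r x hx
    exact ContinuousAt.comp (g := fun t : ℝ => t ^ r)
      (f := fun y : EuclideanSpace ℝ (Fin N) => y i) (x := x)
      (Real.continuousAt_rpow_const _ r (Or.inl (ne_of_gt hx))) hproj_cont.continuousAt
  have habsu : ∀ (r : ℝ), 0 ≤ r → Continuous fun x : EuclideanSpace ℝ (Fin N) => |u x| ^ r :=
    fun r hr => (continuous_abs.comp hu.continuous).rpow_const (fun _ => Or.inr hr)
  -- main functions
  set A1 : EuclideanSpace ℝ (Fin N) → ℝ := fun x => (x i) ^ (α - p) * |u x| ^ p with hA1def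
  set A2 : EuclideanSpace ℝ (Fin N) → ℝ :=
    fun x => ((x i) ^ c * (p * (|u x| ^ (p - 2) * u x))) * du x with hA2def
  set Kf : EuclideanSpace ℝ (Fin N) → ℝ := fun x => (x i) ^ α * |du x| ^ p with hKfdef
  set Jf : EuclideanSpace ℝ (Fin N) → ℝ := fun x => (x i) ^ α * ‖gradient u x‖ ^ p with hJfdef
  set Af : EuclideanSpace ℝ (Fin N) → ℝ :=
    fun x => (x i) ^ ((α - p) / q) * |u x| ^ (p - 1) with hAfdef
  set Bf : EuclideanSpace ℝ (Fin N) → ℝ := fun x => (x i) ^ (α / p) * |du x| with hBfdef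
  set F : EuclideanSpace ℝ (Fin N) → ℝ := fun x => (x i) ^ c * |u x| ^ p with hFdef
  set L : EuclideanSpace ℝ (Fin N) → (EuclideanSpace ℝ (Fin N) →L[ℝ] ℝ) :=
    fun x => (c * (x i) ^ (α - p) * |u x| ^ p) • (EuclideanSpace.proj i) +
      ((x i) ^ c * (p * (|u x| ^ (p - 2) * u x))) • fderiv ℝ u x with hLdef
  -- vanishing facts
  have hA1_zero : ∀ x ∉ tsupport u, A1 x = 0 := by
    intro x hx; rw [hA1def]; simp [hu_zero x hx, Real.zero_rpow hp0']
  have hA2_zero : ∀ x ∉ tsupport u, A2 x = 0 := by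
    intro x hx; rw [hA2def]; simp [hdu_zero x hx]
  have hKf_zero : ∀ x ∉ tsupport u, Kf x = 0 := by
    intro x hx; rw [hKfdef]; simp [hdu_zero x hx, Real.zero_rpow hp0']
  have hJf_zero : ∀ x ∉ tsupport u, Jf x = 0 := by
    intro x hx; rw [hJfdef]; simp [hgrad_zero x hx, Real.zero_rpow hp0']
  have hAf_zero : ∀ x ∉ tsupport u, Af x = 0 := by
    intro x hx; rw [hAfdef]; simp [hu_zero x hx, Real.zero_rpow hp1']
  have hBf_zero : ∀ x ∉ tsupport u, Bf x = 0 := by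
    intro x hx; rw [hBfdef]; simp [hdu_zero x hx]
  have hL_zero : ∀ x ∉ tsupport u, L x = 0 := by
    intro x hx; rw [hLdef]
    simp [hu_zero x hx, Real.zero_rpow hp0']
  have hF_zero : ∀ x ∉ tsupport u, F x = 0 := by
    intro x hx; rw [hFdef]; simp [hu_zero x hx, Real.zero_rpow hp0']
  have hnotS : ∀ x : EuclideanSpace ℝ (Fin N), x ∉ S → x ∉ tsupport u :=
    fun x hx h => hx (husub h)
  -- derivative of F
  have hpg : ∀ x, HasFDerivAt F (L x) x := by
    intro x
    by_cases hx : x ∈ S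
    · have hx0 : (0:ℝ) < x i := hx
      have h1 : HasFDerivAt (fun y : EuclideanSpace ℝ (Fin N) => (y i) ^ c)
          ((c * (x i) ^ (c - 1)) • (EuclideanSpace.proj (𝕜 := ℝ) i)) x := by
        have hd := Real.hasDerivAt_rpow_const (x := x i) (p := c) (Or.inl (ne_of_gt hx0))
        exact hd.comp_hasFDerivAt x (EuclideanSpace.proj (𝕜 := ℝ) i).hasFDerivAt
      have h2 : HasFDerivAt (fun y => |u y| ^ p)
          ((p * (|u x| ^ (p - 2) * u x)) • fderiv ℝ u x) x :=
        (habs_deriv hp (u x)).comp_hasFDerivAt x (hdiff x).hasFDerivAt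
      have h3 := h1.mul h2
      rw [hFdef, hLdef]
      refine HasFDerivAt.congr_fderiv h3 ?_
      ext y
      simp only [ContinuousLinearMap.add_apply, ContinuousLinearMap.coe_smul',
        Pi.smul_apply, smul_eq_mul]
      rw [show c - 1 = α - p by rw [hcdef]; ring]
      ring
    · have hx' : x ∉ tsupport u := hnotS x hx
      rw [hL_zero x hx']
      have hF0 : F =ᶠ[𝓝 x] fun _ => 0 :=
        eventually_of_mem (hopen.mem_nhds hx') (fun y hy => hF_zero y hy)
      exact (hasFDerivAt_const (0:ℝ) x).congr_of_eventuallyEq hF0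
  -- Lipschitz bound for F
  have hL_cont : Continuous L := by
    rw [continuous_iff_continuousAt]
    intro x
    by_cases hx : x ∈ S
    · rw [hLdef]
      apply ContinuousAt.add
      · exact (((continuousAt_const.mul (hrpowS (α - p) x hx)).mul
          (habsu p hp0.le).continuousAt)).smul continuousAt_const
      · exact ((hrpowS c x hx).mul (continuousAt_const.mul
          (((habs_cont hp).comp hu.continuous).continuousAt))).smul hfcont.continuousAt
    · have hx' : x ∉ tsupport u := hnotS x hx
      have hev : L =ᶠ[𝓝 x] fun _ => 0 :=
        eventually_of_mem (hopen.mem_nhds hx') (fun y hy => hL_zero y hy)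
      exact continuousAt_const.congr hev.symm
  obtain ⟨M, hM⟩ := hL_cont.norm.bounded_above_of_compact_support
    (HasCompactSupport.intro hu_supp (fun x hx => by rw [hL_zero x hx, norm_zero]))
  have hFlip : LipschitzWith M.toNNReal F := by
    apply lipschitzWith_of_nnnorm_fderiv_le (fun x => (hpg x).differentiableAt)
    intro x
    rw [(hpg x).fderiv, ← NNReal.coe_le_coe, coe_nnnorm, Real.coe_toNNReal']
    have h9 := hM x
    rw [norm_norm] at h9
    exact le_max_of_le_left h9
  have hFsupp : HasCompactSupport F := HasCompactSupport.intro hu_supp hF_zero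
  -- integration by parts
  have hIBP := LipschitzWith.integral_lineDeriv_mul_eq (μ := volume)
    (LipschitzWith.const' (1:ℝ) (K := M.toNNReal)) hFlip hFsupp (-e)
  have hld1 : ∀ (x : EuclideanSpace ℝ (Fin N)) v,
      lineDeriv ℝ (fun _ : EuclideanSpace ℝ (Fin N) => (1:ℝ)) x v = 0 := by
    intro x v
    have := ((hasFDerivAt_const (𝕜 := ℝ) (1:ℝ) x).hasLineDerivAt v).lineDeriv
    simpa using this
  have hldF : ∀ x, lineDeriv ℝ F x e = L x e := fun x => ((hpg x).hasLineDerivAt e).lineDeriv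
  have hkey : ∫ x, L x e = 0 := by
    have h0 : ∫ x, lineDeriv ℝ F x (- -e) * (1:ℝ) = 0 := by
      rw [← hIBP]
      simp [hld1]
    rw [neg_neg] at h0
    simp only [hldF, mul_one] at h0
    exact h0
  have hpe : (EuclideanSpace.proj (𝕜 := ℝ) i) e = 1 := by
    rw [hedef]
    simp [EuclideanSpace.single_apply]
  have hLe : ∀ x, L x e = c * A1 x + A2 x := by
    intro x
    rw [hLdef, hA1def, hA2def]
    simp only [ContinuousLinearMap.add_apply, ContinuousLinearMap.coe_smul',
      Pi.smul_apply, smul_eq_mul, hpe]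
    ring
  -- integrability
  have intA1 : Integrable A1 := by
    apply hmk_int _ _ hA1_zero
    intro x hx
    exact (hrpowS (α - p) x hx).mul (habsu p hp0.le).continuousAt
  have intA2 : Integrable A2 := by
    apply hmk_int _ _ hA2_zero
    intro x hx
    exact ((hrpowS c x hx).mul (continuousAt_const.mul
      (((habs_cont hp).comp hu.continuous).continuousAt))).mul hdu_cont.continuousAt
  have intKf : Integrable Kf := by
    apply hmk_int _ _ hKf_zero
    intro x hx
    exact (hrpowS α x hx).mul
      ((hdu_cont.abs.rpow_const (fun _ => Or.inr hp0.le)).continuousAt)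
  have intJf : Integrable Jf := by
    apply hmk_int _ _ hJf_zero
    intro x hx
    have hgc : Continuous fun x => ‖gradient u x‖ := by
      have : Continuous fun x => gradient u x :=
        (InnerProductSpace.toDual ℝ _).symm.continuous.comp hfcont
      exact this.norm
    exact (hrpowS α x hx).mul ((hgc.rpow_const (fun _ => Or.inr hp0.le)).continuousAt)
  have memBf : MemLp Bf (ENNReal.ofReal p) := by
    apply hmk_memLp _ _ _ hBf_zero
    intro x hx
    exact (hrpowS (α / p) x hx).mul hdu_cont.abs.continuousAt
  have memAf : MemLp Af (ENNReal.ofReal q) := by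
    apply hmk_memLp _ _ _ hAf_zero
    intro x hx
    exact (hrpowS ((α - p) / q) x hx).mul (habsu (p - 1) hp1.le).continuousAt
  -- key identity
  have key2 : c * (∫ x, A1 x) = - ∫ x, A2 x := by
    have h1 : ∫ x, (c * A1 x + A2 x) = 0 := by
      rw [← integral_congr_ae (Eventually.of_forall hLe)]
      exact hkey
    rw [integral_add (intA1.const_mul c) intA2, integral_const_mul] at h1
    linarith
  -- pointwise identities
  have habs_A2 : ∀ x, |A2 x| = p * (Bf x * Af x) := by
    intro x
    by_cases hx : x ∈ S
    · have hx0 : (0:ℝ) < x i := hx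
      rw [hA2def, hBfdef, hAfdef]
      by_cases hu0 : u x = 0
      · simp [hu0, Real.zero_rpow hp1']
      · have hau : (0:ℝ) < |u x| := abs_pos.2 hu0
        have hsplit : (x i) ^ c = (x i) ^ (α / p) * (x i) ^ ((α - p) / q) := by
          rw [← Real.rpow_add hx0, hcdef, hqdef]
          congr 1
          field_simp
          ring
        have huu : |u x| ^ (p - 2) * |u x| = |u x| ^ (p - 1) := by
          rw [show p - 1 = p - 2 + 1 by ring, Real.rpow_add_one (ne_of_gt hau)]
        rw [abs_mul, abs_mul, abs_mul, abs_mul,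
          abs_of_nonneg (Real.rpow_nonneg hx0.le c),
          abs_of_nonneg hp0.le,
          abs_of_nonneg (Real.rpow_nonneg (abs_nonneg _) (p - 2)), hsplit]
        calc (x i) ^ (α / p) * (x i) ^ ((α - p) / q) * (p * (|u x| ^ (p - 2) * |u x|)) * |du x|
            = (x i) ^ (α / p) * (x i) ^ ((α - p) / q) * (p * |u x| ^ (p - 1)) * |du x| := by
              rw [huu]
          _ = p * ((x i) ^ (α / p) * |du x| * ((x i) ^ ((α - p) / q) * |u x| ^ (p - 1))) := by
              ring
    · have hx' : x ∉ tsupport u := hnotS x hx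
      rw [hA2_zero x hx', hBf_zero x hx']
      simp
  have hBfp : ∀ x, Bf x ^ p = Kf x := by
    intro x
    by_cases hx : x ∈ S
    · have hx0 : (0:ℝ) < x i := hx
      rw [hBfdef, hKfdef]
      rw [Real.mul_rpow (Real.rpow_nonneg hx0.le _) (abs_nonneg _),
        ← Real.rpow_mul hx0.le, div_mul_cancel₀ _ hp0']
    · have hx' : x ∉ tsupport u := hnotS x hx
      rw [hBf_zero x hx', hKf_zero x hx', Real.zero_rpow hp0']
  have hAfq : ∀ x, Af x ^ q = A1 x := by
    intro x
    by_cases hx : x ∈ S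
    · have hx0 : (0:ℝ) < x i := hx
      rw [hAfdef, hA1def]
      rw [Real.mul_rpow (Real.rpow_nonneg hx0.le _) (Real.rpow_nonneg (abs_nonneg _) _),
        ← Real.rpow_mul hx0.le, div_mul_cancel₀ _ hq0',
        ← Real.rpow_mul (abs_nonneg _)]
      congr 1
      rw [hqdef]
      field_simp
    · have hx' : x ∉ tsupport u := hnotS x hx
      rw [hAf_zero x hx', hA1_zero x hx', Real.zero_rpow hq0']
  -- nonnegativity
  have hA1_nonneg : ∀ x, 0 ≤ A1 x := by
    intro x
    by_cases hx : (0:ℝ) ≤ x i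
    · exact mul_nonneg (Real.rpow_nonneg hx _) (Real.rpow_nonneg (abs_nonneg _) _)
    · have hx' : x ∉ tsupport u := hnotS x (fun h => hx (le_of_lt h))
      rw [hA1_zero x hx']
  have hKf_nonneg : ∀ x, 0 ≤ Kf x := by
    intro x
    by_cases hx : (0:ℝ) ≤ x i
    · exact mul_nonneg (Real.rpow_nonneg hx _) (Real.rpow_nonneg (abs_nonneg _) _)
    · have hx' : x ∉ tsupport u := hnotS x (fun h => hx (le_of_lt h))
      rw [hKf_zero x hx']
  have hJf_nonneg : ∀ x, 0 ≤ Jf x := by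
    intro x
    by_cases hx : (0:ℝ) ≤ x i
    · exact mul_nonneg (Real.rpow_nonneg hx _) (Real.rpow_nonneg (norm_nonneg _) _)
    · have hx' : x ∉ tsupport u := hnotS x (fun h => hx (le_of_lt h))
      rw [hJf_zero x hx']
  have hAf_nonneg : ∀ x, 0 ≤ Af x := by
    intro x
    by_cases hx : (0:ℝ) ≤ x i
    · exact mul_nonneg (Real.rpow_nonneg hx _) (Real.rpow_nonneg (abs_nonneg _) _)
    · have hx' : x ∉ tsupport u := hnotS x (fun h => hx (le_of_lt h))
      rw [hAf_zero x hx']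
  have hBf_nonneg : ∀ x, 0 ≤ Bf x := by
    intro x
    by_cases hx : (0:ℝ) ≤ x i
    · exact mul_nonneg (Real.rpow_nonneg hx _) (abs_nonneg _)
    · have hx' : x ∉ tsupport u := hnotS x (fun h => hx (le_of_lt h))
      rw [hBf_zero x hx']
  have hI_nonneg : 0 ≤ ∫ x, A1 x := integral_nonneg hA1_nonneg
  have hK_nonneg : 0 ≤ ∫ x, Kf x := integral_nonneg hKf_nonneg
  have hJ_nonneg : 0 ≤ ∫ x, Jf x := integral_nonneg hJf_nonneg
  -- Hölder
  have hholder := integral_mul_le_Lp_mul_Lq_of_nonneg (μ := volume) hpq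
    (ae_of_all _ hBf_nonneg) (ae_of_all _ hAf_nonneg) memBf memAf
  -- main chained inequality
  have hmain : |c| * ∫ x, A1 x ≤ p * ((∫ x, Kf x) ^ (1/p) * (∫ x, A1 x) ^ (1/q)) := by
    calc |c| * ∫ x, A1 x = |c * ∫ x, A1 x| := by
          rw [abs_mul, abs_of_nonneg hI_nonneg]
      _ = |∫ x, A2 x| := by rw [key2, abs_neg]
      _ ≤ ∫ x, |A2 x| := by
          simpa using norm_integral_le_integral_norm A2
      _ = ∫ x, p * (Bf x * Af x) := integral_congr_ae (Eventually.of_forall habs_A2)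
      _ = p * ∫ x, Bf x * Af x := integral_const_mul p _
      _ ≤ p * ((∫ x, Bf x ^ p) ^ (1/p) * (∫ x, Af x ^ q) ^ (1/q)) :=
          mul_le_mul_of_nonneg_left hholder hp0.le
      _ = p * ((∫ x, Kf x) ^ (1/p) * (∫ x, A1 x) ^ (1/q)) := by
          simp only [hBfp, hAfq]
  -- K ≤ J
  have hKJ : ∫ x, Kf x ≤ ∫ x, Jf x := by
    apply integral_mono intKf intJf
    intro x
    by_cases hx : (0:ℝ) ≤ x i
    · exact mul_le_mul_of_nonneg_left
        (Real.rpow_le_rpow (abs_nonneg _) (hdu_le x) hp0.le) (Real.rpow_nonneg hx α)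
    · have hx' : x ∉ tsupport u := hnotS x (fun h => hx (le_of_lt h))
      rw [hKf_zero x hx', hJf_zero x hx']
  -- conversion to set integrals
  have hmeas : MeasurableSet S := by
    exact (isOpen_lt continuous_const hproj_cont).measurableSet
  have goalI : ∫ x in S, (x i) ^ (α - p) * |u x| ^ p = ∫ x, A1 x := by
    rw [hA1def]
    exact setIntegral_eq_integral_of_forall_compl_eq_zero
      (fun x hx => hA1_zero x (hnotS x hx))
  have goalJ : ∫ x in S, (x i) ^ α * ‖gradient u x‖ ^ p = ∫ x, Jf x := by
    rw [hJfdef]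
    exact setIntegral_eq_integral_of_forall_compl_eq_zero
      (fun x hx => hJf_zero x (hnotS x hx))
  -- final algebra
  have habs_c : |p - 1 - α| = |c| := by
    rw [hcdef, show p - 1 - α = -(α - p + 1) by ring, abs_neg]
  have hfinal : (|p - 1 - α| / p) ^ p * ∫ x in S, (x i) ^ (α - p) * |u x| ^ p ≤
      ∫ x in S, (x i) ^ α * ‖gradient u x‖ ^ p := by
    rw [goalI, goalJ, habs_c]
    rcases eq_or_lt_of_le hI_nonneg with hI0 | hIpos
    · rw [← hI0, mul_zero]
      exact hJ_nonneg
    · have hIq : (∫ x, A1 x) = (∫ x, A1 x) ^ (1/q) * (∫ x, A1 x) ^ (1/p) := by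
        rw [← Real.rpow_add hIpos]
        rw [show 1/q + 1/p = 1 by
          rw [one_div, one_div, add_comm]; exact hpq.inv_add_inv_eq_one]
        rw [Real.rpow_one]
      have hIqpos : 0 < (∫ x, A1 x) ^ (1/q) := Real.rpow_pos_of_pos hIpos _
      have h5 : |c| * (∫ x, A1 x) ^ (1/p) * (∫ x, A1 x) ^ (1/q) ≤
          p * (∫ x, Kf x) ^ (1/p) * (∫ x, A1 x) ^ (1/q) := by
        calc |c| * (∫ x, A1 x) ^ (1/p) * (∫ x, A1 x) ^ (1/q)
            = |c| * ((∫ x, A1 x) ^ (1/q) * (∫ x, A1 x) ^ (1/p)) := by ring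
          _ = |c| * ∫ x, A1 x := by rw [← hIq]
          _ ≤ p * ((∫ x, Kf x) ^ (1/p) * (∫ x, A1 x) ^ (1/q)) := hmain
          _ = p * (∫ x, Kf x) ^ (1/p) * (∫ x, A1 x) ^ (1/q) := by ring
      have h6 : |c| * (∫ x, A1 x) ^ (1/p) ≤ p * (∫ x, Kf x) ^ (1/p) :=
        le_of_mul_le_mul_right h5 hIqpos
      have h7 : (|c| / p) * (∫ x, A1 x) ^ (1/p) ≤ (∫ x, Kf x) ^ (1/p) := by
        rw [div_mul_eq_mul_div, div_le_iff₀ hp0]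
        calc |c| * (∫ x, A1 x) ^ (1/p) ≤ p * (∫ x, Kf x) ^ (1/p) := h6
          _ = (∫ x, Kf x) ^ (1/p) * p := by ring
      have h8 : ((|c| / p) * (∫ x, A1 x) ^ (1/p)) ^ p ≤ ((∫ x, Kf x) ^ (1/p)) ^ p :=
        Real.rpow_le_rpow
          (mul_nonneg (div_nonneg (abs_nonneg _) hp0.le) (Real.rpow_nonneg hI_nonneg _))
          h7 hp0.le
      have hLHS : ((|c| / p) * (∫ x, A1 x) ^ (1/p)) ^ p = (|c| / p) ^ p * ∫ x, A1 x := by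
        rw [Real.mul_rpow (div_nonneg (abs_nonneg _) hp0.le) (Real.rpow_nonneg hI_nonneg _),
          ← Real.rpow_mul hI_nonneg, one_div_mul_cancel hp0', Real.rpow_one]
      have hRHS : ((∫ x, Kf x) ^ (1/p)) ^ p = ∫ x, Kf x := by
        rw [← Real.rpow_mul hK_nonneg, one_div_mul_cancel hp0', Real.rpow_one]
      rw [hLHS, hRHS] at h8
      exact h8.trans hKJ
  exact hfinal
end

section
/- (Hardy–Poincaré inequality for the hyperbolic plane, Euclidean form.) Let α ∈ ℝ and let ℂ₊ = {(x, y) ∈ ℝ² : y > 0} be the upper half-plane. Then for every u ∈ C_c^∞(ℂ₊): ((1−α)²/4) ∫_{ℂ₊} y^{α−2} u(x,y)² dx dy ≤ ∫_{ℂ₊} y^α |∇u(x,y)|² dx dy. -/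
open MeasureTheory Real Set Filter Topology
open scoped RealInnerProductSpace

noncomputable section

def TT : ℝ × ℝ → EuclideanSpace ℝ (Fin 2) :=
  fun p => p.1 • EuclideanSpace.single 0 1 + p.2 • EuclideanSpace.single 1 1

lemma TT_apply (p : ℝ × ℝ) (i : Fin 2) : TT p i = ![p.1, p.2] i := by
  fin_cases i <;> simp [TT, EuclideanSpace.single_apply]

lemma TT_apply0 (p : ℝ × ℝ) : TT p 0 = p.1 := by rw [TT_apply]; rfl

lemma TT_apply1 (p : ℝ × ℝ) : TT p 1 = p.2 := by rw [TT_apply]; rfl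

lemma TT_eq :
    ⇑(((MeasurableEquiv.finTwoArrow (α := ℝ)).symm).trans
      (MeasurableEquiv.toLp 2 (Fin 2 → ℝ))) = TT := by
  funext p; ext i
  rw [TT_apply]
  simp only [MeasurableEquiv.coe_trans, Function.comp,
    MeasurableEquiv.coe_toLp]
  fin_cases i <;> rfl

lemma cont_eval : Continuous fun x : EuclideanSpace ℝ (Fin 2) => x 1 :=
  (EuclideanSpace.proj (1 : Fin 2)).continuous

lemma TT_measurePreserving : MeasurePreserving TT volume volume := by
  rw [← TT_eq, MeasurableEquiv.coe_trans]
  exact ((EuclideanSpace.volume_preserving_symm_measurableEquiv_toLp (Fin 2)).symm _).comp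
    ((volume_preserving_finTwoArrow ℝ).symm _)

lemma TT_emb : MeasurableEmbedding TT := TT_eq ▸ (MeasurableEquiv.measurableEmbedding _)

lemma TT_cont : Continuous TT := by
  unfold TT
  exact (continuous_fst.smul continuous_const).add (continuous_snd.smul continuous_const)

lemma integral_TT (g : EuclideanSpace ℝ (Fin 2) → ℝ) : ∫ x, g x = ∫ p, g (TT p) :=
  (TT_measurePreserving.integral_comp TT_emb g).symm

lemma abs_coord_le_norm (x : EuclideanSpace ℝ (Fin 2)) (i : Fin 2) : |x i| ≤ ‖x‖ := by
  have h := abs_real_inner_le_norm (EuclideanSpace.single i (1:ℝ)) x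
  simp [EuclideanSpace.inner_single_left, EuclideanSpace.norm_single] at h
  simpa using h


theorem stmt19 (α : ℝ)
    (u : EuclideanSpace ℝ (Fin 2) → ℝ)
    (hu : ContDiff ℝ (⊤ : ℕ∞) u) (hu_supp : HasCompactSupport u)
    (hu_sub : tsupport u ⊆ {x : EuclideanSpace ℝ (Fin 2) | 0 < x 1}) :
    ((1 - α) ^ 2 / 4) *
        ∫ x in {x : EuclideanSpace ℝ (Fin 2) | 0 < x 1}, (x 1) ^ (α - 2) * u x ^ 2 ≤
      ∫ x in {x : EuclideanSpace ℝ (Fin 2) | 0 < x 1},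
        (x 1) ^ α * ‖gradient u x‖ ^ 2 := by
  classical
  set S : Set (EuclideanSpace ℝ (Fin 2)) := {x : EuclideanSpace ℝ (Fin 2) | 0 < x 1} with hS_def
  have hK : IsCompact (tsupport u) := hu_supp
  have hS_open : IsOpen S := isOpen_lt continuous_const cont_eval
  have hSmeas : MeasurableSet S := hS_open.measurableSet
  rcases (tsupport u).eq_empty_or_nonempty with hKe | hKne
  · have hu0 : u = fun _ => 0 := by
      funext x
      exact image_eq_zero_of_notMem_tsupport (by simp [hKe])
    rw [hu0]
    simp [gradient_const]
  obtain ⟨z, hzK, hz⟩ := hK.exists_isMinOn hKne (cont_eval.continuousOn)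
  set ε := z 1 with hε_def
  have hε : 0 < ε := hu_sub hzK
  have hKε : ∀ x ∈ tsupport u, ε ≤ x 1 := fun x hx => isMinOn_iff.mp hz x hx
  have hlow : ∀ x : EuclideanSpace ℝ (Fin 2), x 1 < ε → x ∉ tsupport u :=
    fun x hx hxK => absurd (hKε x hxK) (not_le.2 hx)
  set e₁ : EuclideanSpace ℝ (Fin 2) := EuclideanSpace.single 1 1 with he₁
  set du : EuclideanSpace ℝ (Fin 2) → ℝ := fun x => fderiv ℝ u x e₁ with hdu_def
  have hnotK : ∀ x, x ∉ tsupport u → u x = 0 ∧ fderiv ℝ u x = 0 := by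
    intro x hx
    refine ⟨image_eq_zero_of_notMem_tsupport hx, ?_⟩
    have hopen : IsOpen (tsupport u)ᶜ := (isClosed_tsupport u).isOpen_compl
    have hev : u =ᶠ[nhds x] fun _ => (0:ℝ) :=
      Filter.eventually_of_mem (hopen.mem_nhds hx)
        (fun y hy => image_eq_zero_of_notMem_tsupport hy)
    calc fderiv ℝ u x = fderiv ℝ (fun _ => (0:ℝ)) x := hev.fderiv_eq
      _ = 0 := fderiv_const_apply 0
  -- integrability helper
  have hint : ∀ (p : ℝ) (v : (EuclideanSpace ℝ (Fin 2)) → ℝ), Continuous v →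
      (∀ x, x ∉ tsupport u → v x = 0) →
      IntegrableOn (fun x => (x 1) ^ p * v x) S := by
    intro p v hv hv0
    have hKS : tsupport u ⊆ S := hu_sub
    have hconS : ∀ x ∈ S, ContinuousAt (fun x : EuclideanSpace ℝ (Fin 2) => (x 1 : ℝ) ^ p * v x) x := by
      intro x hx
      have h1 : ContinuousAt (fun t : ℝ => t ^ p) (x 1) :=
        Real.continuousAt_rpow_const (x 1) p (Or.inl (ne_of_gt hx))
      exact ((ContinuousAt.comp (x := x) h1 cont_eval.continuousAt).mul hv.continuousAt)
    have hIK : IntegrableOn (fun x => (x 1) ^ p * v x) (tsupport u) :=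
      (ContinuousOn.integrableOn_compact hK
        fun x hx => (hconS x (hKS hx)).continuousWithinAt)
    have hId : IntegrableOn (fun x => (x 1) ^ p * v x) (S \ tsupport u) := by
      apply (integrableOn_zero (μ := volume)).congr_fun ?_ (hSmeas.diff hK.measurableSet)
      intro x hx
      simp [hv0 x hx.2]
    exact (hIK.union hId).mono_set fun x hx => by
      by_cases hxK : x ∈ tsupport u
      · exact Or.inl hxK
      · exact Or.inr ⟨hx, hxK⟩
  have hzeroS : ∀ f : EuclideanSpace ℝ (Fin 2) → ℝ, (∀ x, x ∉ S → f x = 0) →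
      ∫ x in S, f x = ∫ x, f x :=
    fun f hf => setIntegral_eq_integral_of_forall_compl_eq_zero hf
  -- the function w and its directional derivative g
  set w : EuclideanSpace ℝ (Fin 2) → ℝ := fun x => (x 1) ^ (α - 1) * u x ^ 2 with hw_def
  set g : EuclideanSpace ℝ (Fin 2) → ℝ := fun x =>
    (α - 1) * ((x 1) ^ (α - 2) * u x ^ 2) + 2 * ((x 1) ^ (α - 1) * (u x * du x)) with hg_def
  have hg0 : ∀ x, x ∉ tsupport u → g x = 0 := by
    intro x hx
    simp [hg_def, hdu_def, (hnotK x hx).1, (hnotK x hx).2]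
  have hφ : ∀ a t : ℝ, HasDerivAt (fun s : ℝ => TT (a, s)) e₁ t := by
    intro a t
    have h1 : HasDerivAt (fun s : ℝ => s • e₁) ((1:ℝ) • e₁) t := (hasDerivAt_id t).smul_const e₁
    simpa [TT, he₁] using h1.const_add (a • EuclideanSpace.single (0 : Fin 2) (1:ℝ))
  have hu' : ∀ x, HasFDerivAt u (fderiv ℝ u x) x := fun x =>
    (hu.differentiable (by simp) x).hasFDerivAt
  have hslice : ∀ a t : ℝ, HasDerivAt (fun s => w (TT (a, s))) (g (TT (a, t))) t := by
    intro a t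
    have hT1 : ∀ s : ℝ, TT (a, s) 1 = s := fun s => TT_apply1 (a, s)
    have huc : HasDerivAt (fun s => u (TT (a, s))) (du (TT (a, t))) t :=
      (hu' (TT (a, t))).comp_hasDerivAt t (hφ a t)
    rcases lt_or_ge t ε with hcase | hcase
    · have hopen : IsOpen (Iio ε) := isOpen_Iio
      have hev : (fun s => w (TT (a, s))) =ᶠ[nhds t] fun _ => (0:ℝ) := by
        filter_upwards [hopen.mem_nhds hcase] with s hs
        have h0 : u (TT (a, s)) = 0 :=
          (hnotK _ (hlow _ (by rw [hT1 s]; exact hs))).1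
        simp [hw_def, h0]
      have hxK : TT (a, t) ∉ tsupport u := hlow _ (by rw [hT1 t]; exact hcase)
      rw [hg0 _ hxK]
      exact (hasDerivAt_const t (0:ℝ)).congr_of_eventuallyEq hev
    · have ht0 : 0 < t := lt_of_lt_of_le hε hcase
      have hr : HasDerivAt (fun s : ℝ => s ^ (α - 1)) ((α - 1) * t ^ (α - 1 - 1)) t :=
        Real.hasDerivAt_rpow_const (Or.inl (ne_of_gt ht0))
      have hmul : HasDerivAt (fun s : ℝ => s ^ (α - 1) * u (TT (a, s)) ^ 2) _ t := hr.mul (huc.pow 2)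
      have heqf : (fun s : ℝ => s ^ (α - 1) * u (TT (a, s)) ^ 2)
          = fun s => w (TT (a, s)) := by
        funext s
        rw [hw_def]
        simp only [hT1 s]
      rw [heqf] at hmul
      convert hmul using 1
      rw [hg_def]
      simp only [hT1 t]
      have he2 : α - 1 - 1 = α - 2 := by ring
      rw [← he2]
      push_cast
      ring
  have hducont : Continuous du := (hu.continuous_fderiv (by simp)).clm_apply continuous_const
  have hucont : Continuous u := hu.continuous
  have hgcont : Continuous g := by
    rw [continuous_iff_continuousAt]
    intro x
    rcases lt_or_ge (x 1) ε with hcase | hcase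
    · have hopen : IsOpen {y : EuclideanSpace ℝ (Fin 2) | y 1 < ε} :=
        isOpen_lt cont_eval continuous_const
      have hev : g =ᶠ[nhds x] fun _ => (0:ℝ) := by
        filter_upwards [hopen.mem_nhds hcase] with y hy
        exact hg0 y (hlow y hy)
      exact continuousAt_const.congr hev.symm
    · have hx0 : (0:ℝ) < x 1 := lt_of_lt_of_le hε hcase
      have h1 : ContinuousAt (fun t : ℝ => t ^ (α - 2)) (x 1) :=
        Real.continuousAt_rpow_const (x 1) _ (Or.inl (ne_of_gt hx0))
      have h2 : ContinuousAt (fun t : ℝ => t ^ (α - 1)) (x 1) :=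
        Real.continuousAt_rpow_const (x 1) _ (Or.inl (ne_of_gt hx0))
      exact ((continuousAt_const.mul ((ContinuousAt.comp (x := x) h1
        cont_eval.continuousAt).mul ((hucont.continuousAt).pow 2))).add
        (continuousAt_const.mul ((ContinuousAt.comp (x := x) h2
          cont_eval.continuousAt).mul ((hucont.continuousAt).mul hducont.continuousAt))))
  obtain ⟨R, hR⟩ : ∃ R : ℝ, ∀ x ∈ tsupport u, ‖x‖ ≤ R := by
    obtain ⟨R, hR⟩ := hK.isBounded.subset_closedBall 0
    exact ⟨R, fun x hx => by simpa [Metric.mem_closedBall, dist_zero_right] using hR hx⟩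
  have hTK : ∀ p : ℝ × ℝ, TT p ∈ tsupport u → |p.1| ≤ R ∧ |p.2| ≤ R := by
    intro p hp
    constructor
    · have h0 := abs_coord_le_norm (TT p) 0
      rw [TT_apply0] at h0
      exact h0.trans (hR _ hp)
    · have h0 := abs_coord_le_norm (TT p) 1
      rw [TT_apply1] at h0
      exact h0.trans (hR _ hp)
  have hh_cont : Continuous fun p : ℝ × ℝ => g (TT p) := hgcont.comp TT_cont
  have hh_supp : HasCompactSupport fun p : ℝ × ℝ => g (TT p) := by
    apply HasCompactSupport.intro (K := Icc (-R) R ×ˢ Icc (-R) R)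
      ((isCompact_Icc).prod isCompact_Icc)
    intro p hp
    by_contra hne
    have hpK : TT p ∈ tsupport u := by
      by_contra hTp; exact hne (hg0 _ hTp)
    obtain ⟨h1, h2⟩ := hTK p hpK
    exact hp (Set.mem_prod.2 ⟨Set.mem_Icc.2 (abs_le.mp h1), Set.mem_Icc.2 (abs_le.mp h2)⟩)
  have hh_int : Integrable (fun p : ℝ × ℝ => g (TT p)) volume :=
    hh_cont.integrable_of_hasCompactSupport hh_supp
  have hinner : ∀ a : ℝ, ∫ t : ℝ, g (TT (a, t)) = 0 := by
    intro a
    set f : ℝ → ℝ := fun t => w (TT (a, t)) with hf_def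
    have hfd : ∀ t, HasDerivAt f (g (TT (a, t))) t := fun t => hslice a t
    have hderiv : deriv f = fun t => g (TT (a, t)) := funext fun t => (hfd t).deriv
    have hdc : Continuous (deriv f) := by
      rw [hderiv]; exact hh_cont.comp (Continuous.prodMk_right a)
    have hfc1 : ContDiff ℝ 1 f := contDiff_one_iff_deriv.mpr
      ⟨fun t => (hfd t).differentiableAt, hdc⟩
    have hfsupp : HasCompactSupport f := by
      apply HasCompactSupport.intro (isCompact_Icc (a := -R) (b := R))
      intro t ht
      have hxK : TT (a, t) ∉ tsupport u := by
        intro hxK; exact ht (Set.mem_Icc.2 (abs_le.mp (hTK _ hxK).2))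
      simp [hf_def, hw_def, (hnotK _ hxK).1]
    have hdi : Integrable (deriv f) :=
      hdc.integrable_of_hasCompactSupport hfsupp.deriv
    calc ∫ t : ℝ, g (TT (a, t)) = ∫ t : ℝ, deriv f t := by rw [hderiv]
      _ = (∫ t in Iic (0:ℝ), deriv f t) + ∫ t in Ioi (0:ℝ), deriv f t :=
          (intervalIntegral.integral_Iic_add_Ioi hdi.integrableOn hdi.integrableOn).symm
      _ = f 0 + -f 0 := by
          rw [HasCompactSupport.integral_Iic_deriv_eq hfc1 hfsupp 0,
            HasCompactSupport.integral_Ioi_deriv_eq hfc1 hfsupp 0]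
      _ = 0 := by ring
  have hIBP0 : ∫ x : EuclideanSpace ℝ (Fin 2), g x = 0 := by
    rw [integral_TT g]
    rw [show (volume : Measure (ℝ × ℝ)) = (volume : Measure ℝ).prod volume from MeasureTheory.Measure.volume_eq_prod ℝ ℝ]
    rw [MeasureTheory.integral_prod _ (by rwa [MeasureTheory.Measure.volume_eq_prod ℝ ℝ] at hh_int)]
    simp [hinner]
  -- integrable pieces
  have hCint : IntegrableOn (fun x => (x 1) ^ (α - 2) * u x ^ 2) S :=
    hint (α - 2) (fun x => u x ^ 2) (hucont.pow 2) (fun x hx => by simp [(hnotK x hx).1])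
  have hBint : IntegrableOn (fun x => (x 1) ^ (α - 1) * (u x * du x)) S :=
    hint (α - 1) (fun x => u x * du x) (hucont.mul hducont)
      (fun x hx => by simp [(hnotK x hx).1])
  have hA'int : IntegrableOn (fun x => (x 1) ^ α * du x ^ 2) S :=
    hint α (fun x => du x ^ 2) (hducont.pow 2)
      (fun x hx => by simp [hdu_def, (hnotK x hx).2])
  have hAint : IntegrableOn (fun x => (x 1) ^ α * ‖gradient u x‖ ^ 2) S := by
    apply hint α (fun x => ‖gradient u x‖ ^ 2)
    · have hgr : (fun x : EuclideanSpace ℝ (Fin 2) => ‖gradient u x‖)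
          = fun x => ‖fderiv ℝ u x‖ :=
        funext fun x => ((InnerProductSpace.toDual ℝ _).symm.norm_map (fderiv ℝ u x))
      have : Continuous fun x : EuclideanSpace ℝ (Fin 2) => ‖gradient u x‖ := by
        rw [hgr]; exact (hu.continuous_fderiv (by simp)).norm
      exact this.pow 2
    · intro x hx
      simp [gradient, (hnotK x hx).2]
  -- g vanishes outside S
  have hgv : ∀ x, x ∉ S → g x = 0 := by
    intro x hx
    exact hg0 x (hlow x (lt_of_le_of_lt (not_lt.1 hx) hε))
  -- integration by parts identity
  have hIBP : (α - 1) * (∫ x in S, (x 1) ^ (α - 2) * u x ^ 2)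
      + 2 * (∫ x in S, (x 1) ^ (α - 1) * (u x * du x)) = 0 := by
    calc (α - 1) * (∫ x in S, (x 1) ^ (α - 2) * u x ^ 2)
          + 2 * (∫ x in S, (x 1) ^ (α - 1) * (u x * du x))
        = (∫ x in S, (α - 1) * ((x 1) ^ (α - 2) * u x ^ 2))
          + ∫ x in S, 2 * ((x 1) ^ (α - 1) * (u x * du x)) := by
          rw [MeasureTheory.integral_const_mul, MeasureTheory.integral_const_mul]
      _ = ∫ x in S, g x := (integral_add (hCint.const_mul _) (hBint.const_mul _)).symm
      _ = ∫ x : EuclideanSpace ℝ (Fin 2), g x := hzeroS g hgv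
      _ = 0 := hIBP0
  -- expansion of the square
  set c : ℝ := (α - 1) / 2 with hc_def
  have hexp : ∀ x ∈ S, ((x 1) ^ (α/2) * du x + c * ((x 1) ^ (α/2 - 1) * u x)) ^ 2
      = (x 1) ^ α * du x ^ 2 + (2*c) * ((x 1) ^ (α - 1) * (u x * du x))
        + c^2 * ((x 1) ^ (α - 2) * u x ^ 2) := by
    intro x hx
    have hx0 : (0:ℝ) < x 1 := hx
    have e1' : (x 1) ^ (α/2) * (x 1) ^ (α/2) = (x 1) ^ α := by
      rw [← Real.rpow_add hx0]; congr 1; ring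
    have e2' : (x 1) ^ (α/2) * (x 1) ^ (α/2 - 1) = (x 1) ^ (α - 1) := by
      rw [← Real.rpow_add hx0]; congr 1; ring
    have e3' : (x 1) ^ (α/2 - 1) * (x 1) ^ (α/2 - 1) = (x 1) ^ (α - 2) := by
      rw [← Real.rpow_add hx0]; congr 1; ring
    calc ((x 1) ^ (α/2) * du x + c * ((x 1) ^ (α/2 - 1) * u x)) ^ 2
        = ((x 1) ^ (α/2) * (x 1) ^ (α/2)) * du x ^ 2
          + (2*c) * (((x 1) ^ (α/2) * (x 1) ^ (α/2 - 1)) * (u x * du x))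
          + c^2 * (((x 1) ^ (α/2 - 1) * (x 1) ^ (α/2 - 1)) * u x ^ 2) := by ring
      _ = _ := by rw [e1', e2', e3']
  have h0 : (0:ℝ) ≤ ∫ x in S, ((x 1) ^ (α/2) * du x + c * ((x 1) ^ (α/2 - 1) * u x)) ^ 2 :=
    setIntegral_nonneg hSmeas fun x _ => sq_nonneg _
  have hsum : ∫ x in S, ((x 1) ^ (α/2) * du x + c * ((x 1) ^ (α/2 - 1) * u x)) ^ 2
      = (∫ x in S, (x 1) ^ α * du x ^ 2)
        + (2*c) * (∫ x in S, (x 1) ^ (α - 1) * (u x * du x))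
        + c^2 * (∫ x in S, (x 1) ^ (α - 2) * u x ^ 2) := by
    rw [setIntegral_congr_fun hSmeas hexp]
    have hI2 : Integrable (fun x : EuclideanSpace ℝ (Fin 2) =>
        (2*c) * ((x 1) ^ (α - 1) * (u x * du x))) (volume.restrict S) :=
      hBint.const_mul _
    have hI3 : Integrable (fun x : EuclideanSpace ℝ (Fin 2) =>
        c^2 * ((x 1) ^ (α - 2) * u x ^ 2)) (volume.restrict S) :=
      hCint.const_mul _
    have hI12 : Integrable (fun x : EuclideanSpace ℝ (Fin 2) =>
        (x 1) ^ α * du x ^ 2 + (2*c) * ((x 1) ^ (α - 1) * (u x * du x)))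
        (volume.restrict S) := hA'int.add hI2
    rw [integral_add hI12 hI3, integral_add hA'int hI2,
      MeasureTheory.integral_const_mul, MeasureTheory.integral_const_mul]
  -- pointwise comparison with the gradient
  have hA'leA : (∫ x in S, (x 1) ^ α * du x ^ 2)
      ≤ ∫ x in S, (x 1) ^ α * ‖gradient u x‖ ^ 2 := by
    apply setIntegral_mono_on hA'int hAint hSmeas
    intro x hx
    have hx0 : (0:ℝ) < x 1 := hx
    apply mul_le_mul_of_nonneg_left ?_ (Real.rpow_nonneg (le_of_lt hx0) α)
    have hinner_eq : du x = ⟪gradient u x, e₁⟫ := by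
      show (fderiv ℝ u x) e₁ = _
      rw [show gradient u x = (InnerProductSpace.toDual ℝ _).symm (fderiv ℝ u x) from rfl,
        ← InnerProductSpace.toDual_apply_apply, LinearIsometryEquiv.apply_symm_apply]
    have habs : |du x| ≤ ‖gradient u x‖ := by
      rw [hinner_eq]
      have := abs_real_inner_le_norm (gradient u x) e₁
      simpa [he₁, EuclideanSpace.norm_single] using this
    calc du x ^ 2 = |du x| ^ 2 := (sq_abs _).symm
      _ ≤ ‖gradient u x‖ ^ 2 := pow_le_pow_left₀ (abs_nonneg _) habs 2
  -- put everything together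
  set CC := ∫ x in S, (x 1) ^ (α - 2) * u x ^ 2 with hCC_def
  set BB := ∫ x in S, (x 1) ^ (α - 1) * (u x * du x) with hBB_def
  set AA' := ∫ x in S, (x 1) ^ α * du x ^ 2 with hAA'_def
  have hB : BB = (1 - α)/2 * CC := by linear_combination hIBP / 2
  have h1 : (0:ℝ) ≤ AA' + (2*c) * BB + c^2 * CC := hsum ▸ h0
  have h2 : AA' + (2*c) * ((1 - α)/2 * CC) + c^2 * CC = AA' - (1 - α)^2/4 * CC := by
    rw [hc_def]; ring
  rw [hB, h2] at h1
  have hfinal : (1 - α)^2/4 * CC ≤ AA' := by linarith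
  exact hfinal.trans hA'leA
end
end
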